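/- arXiv:2508.02797 — 6 statements merged into one kernel-verified Lean document; each statement's English description precedes it below -/
import Mathlib

section
/- For every dimension d ≥ 1, every real number r ≥ 1, and all vectors x, y ∈ ℝ^d, one has (|x|^{r-1} x − |y|^{r-1} y) · (x − y) ≥ (1/2) |x|^{r-1} |x − y|^2 + (1/2) |y|^{r-1} |x − y|^2; in particular the left-hand side is nonnegative. -/
open scoped RealInnerProductSpace

/-- Pointwise monotonicity inequality for the Forchheimer nonlinearity
`x ↦ |x|^{r-1} x` on Euclidean space; in particular the left-hand side is nonnegative. -/
theorem forchheimer_pointwise_monotonicity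
    (d : ℕ) (hd : 1 ≤ d) (r : ℝ) (hr : 1 ≤ r)
    (x y : EuclideanSpace ℝ (Fin d)) :
    ⟪‖x‖ ^ (r - 1) • x - ‖y‖ ^ (r - 1) • y, x - y⟫ ≥
      (1 / 2) * ‖x‖ ^ (r - 1) * ‖x - y‖ ^ 2 + (1 / 2) * ‖y‖ ^ (r - 1) * ‖x - y‖ ^ 2 ∧
    0 ≤ ⟪‖x‖ ^ (r - 1) • x - ‖y‖ ^ (r - 1) • y, x - y⟫ := by
  set a : ℝ := ‖x‖ ^ (r - 1) with ha
  set b : ℝ := ‖y‖ ^ (r - 1) with hb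
  have ha0 : 0 ≤ a := Real.rpow_nonneg (norm_nonneg x) _
  have hb0 : 0 ≤ b := Real.rpow_nonneg (norm_nonneg y) _
  have he : 0 ≤ r - 1 := by linarith
  have hnsq : ‖x - y‖ ^ 2 = ‖x‖ ^ 2 - 2 * ⟪x, y⟫ + ‖y‖ ^ 2 := by
    rw [norm_sub_sq_real]
  have key : ⟪a • x - b • y, x - y⟫ =
      (a + b) / 2 * ‖x - y‖ ^ 2 + (a - b) / 2 * (‖x‖ ^ 2 - ‖y‖ ^ 2) := by
    rw [inner_sub_left, inner_sub_right, inner_sub_right, real_inner_smul_left,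
      real_inner_smul_left, real_inner_smul_left, real_inner_smul_left,
      real_inner_self_eq_norm_sq, real_inner_self_eq_norm_sq, hnsq]
    rw [real_inner_comm y x]
    ring
  have hsign : 0 ≤ (a - b) / 2 * (‖x‖ ^ 2 - ‖y‖ ^ 2) := by
    rcases le_total ‖x‖ ‖y‖ with h | h
    · have hab : a ≤ b := Real.rpow_le_rpow (norm_nonneg x) h he
      have : ‖x‖ ^ 2 ≤ ‖y‖ ^ 2 := by
        exact pow_le_pow_left₀ (norm_nonneg x) h 2
      nlinarith
    · have hab : b ≤ a := Real.rpow_le_rpow (norm_nonneg y) h he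
      have : ‖y‖ ^ 2 ≤ ‖x‖ ^ 2 := by
        exact pow_le_pow_left₀ (norm_nonneg y) h 2
      nlinarith
  have hsqnn : 0 ≤ ‖x - y‖ ^ 2 := sq_nonneg _
  constructor
  · rw [key]; nlinarith
  · rw [key]; nlinarith
end

section
/- For every dimension d ≥ 1, every real number r ≥ 1, and all vectors x, y ∈ ℝ^d, one has (|x|^{r-1} x − |y|^{r-1} y) · (x − y) ≥ (1/2^{r-1}) |x − y|^{r+1}. -/
open scoped RealInnerProductSpace
open Real Set

private lemma forch_conv {r a b : ℝ} (hr : 1 ≤ r) (ha : 0 ≤ a) (hb : 0 ≤ b) :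
    (a + b) ^ r ≤ 2 ^ (r - 1) * (a ^ r + b ^ r) := by
  have h := (convexOn_rpow hr).2 (mem_Ici.2 ha) (mem_Ici.2 hb)
    (by norm_num : (0:ℝ) ≤ 1/2) (by norm_num : (0:ℝ) ≤ 1/2) (by norm_num)
  simp only [smul_eq_mul] at h
  have h2 : ((1:ℝ)/2 * a + 1/2 * b) = (a + b) / 2 := by ring
  rw [h2, Real.div_rpow (by linarith) (by norm_num)] at h
  have h3 : (0:ℝ) < 2 ^ r := Real.rpow_pos_of_pos (by norm_num) r
  have h4 : (2:ℝ) ^ (r - 1) = 2 ^ r / 2 := by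
    rw [Real.rpow_sub (by norm_num), Real.rpow_one]
  rw [div_le_iff₀ h3] at h
  calc (a+b)^r ≤ (1/2 * a^r + 1/2 * b^r) * 2^r := h
    _ = 2^(r-1) * (a^r + b^r) := by rw [h4]; ring

private lemma forch_scalar {r a b c : ℝ} (hr : 1 ≤ r) (ha : 0 ≤ a) (hb : 0 ≤ b)
    (hc : 0 ≤ c) (hcab : c ≤ a + b) :
    (1 / 2 ^ (r - 1)) * c ^ (r + 1) ≤
      (a ^ (r-1) - b ^ (r-1)) * (a ^ 2 - b ^ 2) / 2
        + (a ^ (r-1) + b ^ (r-1)) * c ^ 2 / 2 := by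
  have hr1 : (0:ℝ) ≤ r - 1 := by linarith
  have hD : (0:ℝ) < 2 ^ (r - 1) := Real.rpow_pos_of_pos (by norm_num) _
  have hA : (0:ℝ) ≤ a ^ (r-1) := Real.rpow_nonneg ha _
  have hB : (0:ℝ) ≤ b ^ (r-1) := Real.rpow_nonneg hb _
  have hab : (0:ℝ) ≤ a + b := by linarith
  set A := a ^ (r-1) with hAdef
  set B := b ^ (r-1) with hBdef
  set M := (a+b) ^ (r-1) with hMdef
  set D := (2:ℝ) ^ (r-1) with hDdef
  have hM : (0:ℝ) ≤ M := Real.rpow_nonneg hab _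
  have hK : 0 ≤ (A - B) * (a ^ 2 - b ^ 2) := by
    rcases le_total a b with h | h
    · have h1 : A ≤ B := Real.rpow_le_rpow ha h hr1
      have h2 : a^2 ≤ b^2 := by nlinarith
      nlinarith
    · have h1 : B ≤ A := Real.rpow_le_rpow hb h hr1
      have h2 : b^2 ≤ a^2 := by nlinarith
      nlinarith
  have hsplit : c ^ (r+1) = c ^ (r-1) * c ^ 2 := by
    have h := Real.rpow_add' hc (y := r-1) (z := 2) (by intro h; linarith)
    rw [Real.rpow_two] at h
    rw [show r + 1 = r - 1 + 2 by ring, h]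
  have hcM : c ^ (r+1) ≤ M * c ^ 2 := by
    rw [hsplit]
    exact mul_le_mul_of_nonneg_right (Real.rpow_le_rpow hc hcab hr1) (sq_nonneg c)
  have habM : (a+b) ^ (r+1) = M * (a+b) ^ 2 := by
    have h := Real.rpow_add' hab (y := r-1) (z := 2) (by intro h; linarith)
    rw [Real.rpow_two] at h
    rw [show r + 1 = r - 1 + 2 by ring, h]
  have har : a ^ r = A * a := by
    have h := Real.rpow_add' ha (y := r-1) (z := 1) (by intro h; linarith)
    rw [Real.rpow_one] at h
    rw [show r = r - 1 + 1 by ring]; exact h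
  have hbr : b ^ r = B * b := by
    have h := Real.rpow_add' hb (y := r-1) (z := 1) (by intro h; linarith)
    rw [Real.rpow_one] at h
    rw [show r = r - 1 + 1 by ring]; exact h
  have hcrux : M * (a+b) ^ 2 ≤ D * ((A - B) * (a^2-b^2) / 2 + (A+B) * (a+b)^2 / 2) := by
    have hab1 : (a+b) ^ (r+1) = (a+b) ^ r * (a+b) := by
      have h := Real.rpow_add' hab (y := r) (z := 1) (by intro h; linarith)
      rw [Real.rpow_one] at h
      rw [show r + 1 = r + 1 from rfl]; exact h
    have h1 : (a+b) ^ r * (a+b) ≤ D * (a^r + b^r) * (a+b) :=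
      mul_le_mul_of_nonneg_right (forch_conv hr ha hb) hab
    rw [← hab1, habM] at h1
    calc M * (a+b)^2 ≤ D * (a^r + b^r) * (a+b) := h1
      _ = D * ((A - B) * (a^2-b^2) / 2 + (A+B) * (a+b)^2 / 2) := by
          rw [har, hbr]; ring
  rw [div_mul_eq_mul_div, div_le_iff₀ hD, one_mul]
  rcases le_or_gt M ((A + B) / 2 * D) with hcase | hcase
  · have h2 : M * c^2 ≤ (A+B)/2 * D * c^2 :=
      mul_le_mul_of_nonneg_right hcase (sq_nonneg c)
    have h3 : 0 ≤ (A - B) * (a^2 - b^2) * D := mul_nonneg hK hD.le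
    linarith [hcM, h2, h3]
  · have hgap : 0 ≤ M - (A+B)/2 * D := by linarith
    have hc2 : c^2 ≤ (a+b)^2 := by nlinarith
    have h2 : (M - (A+B)/2 * D) * c^2 ≤ (M - (A+B)/2 * D) * (a+b)^2 :=
      mul_le_mul_of_nonneg_left hc2 hgap
    linarith [hcM, h2, hcrux]

/-- Pointwise strong monotonicity inequality for the Forchheimer nonlinearity
`x ↦ |x|^{r-1} x` on Euclidean space. -/
theorem forchheimer_pointwise_strong_monotonicity
    (d : ℕ) (hd : 1 ≤ d) (r : ℝ) (hr : 1 ≤ r)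
    (x y : EuclideanSpace ℝ (Fin d)) :
    ⟪‖x‖ ^ (r - 1) • x - ‖y‖ ^ (r - 1) • y, x - y⟫ ≥
      (1 / 2 ^ (r - 1)) * ‖x - y‖ ^ (r + 1) := by
  have h1 : ⟪‖x‖ ^ (r - 1) • x - ‖y‖ ^ (r - 1) • y, x - y⟫ =
      ‖x‖ ^ (r-1) * ‖x‖ ^ 2 + ‖y‖ ^ (r-1) * ‖y‖ ^ 2
        - (‖x‖ ^ (r-1) + ‖y‖ ^ (r-1)) * ⟪x, y⟫ := by
    simp only [inner_sub_left, inner_sub_right, real_inner_smul_left,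
      real_inner_self_eq_norm_sq, real_inner_comm y x]
    ring
  have h2 : ‖x - y‖ ^ 2 = ‖x‖ ^ 2 - 2 * ⟪x, y⟫ + ‖y‖ ^ 2 := norm_sub_sq_real x y
  have key := forch_scalar hr (norm_nonneg x) (norm_nonneg y) (norm_nonneg (x - y))
    (norm_sub_le x y)
  rw [ge_iff_le, h1]
  calc (1 / 2 ^ (r-1)) * ‖x - y‖ ^ (r+1)
      ≤ (‖x‖ ^ (r-1) - ‖y‖ ^ (r-1)) * (‖x‖ ^ 2 - ‖y‖ ^ 2) / 2
        + (‖x‖ ^ (r-1) + ‖y‖ ^ (r-1)) * ‖x - y‖ ^ 2 / 2 := key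
    _ = ‖x‖ ^ (r-1) * ‖x‖ ^ 2 + ‖y‖ ^ (r-1) * ‖y‖ ^ 2
        - (‖x‖ ^ (r-1) + ‖y‖ ^ (r-1)) * ⟪x, y⟫ := by rw [h2]; ring
end

section
/- Let O ⊆ ℝ^d be a Lebesgue-measurable set, let r ≥ 1 be a real number, and let u, v ∈ L^{r+1}(O;ℝ^d). Then the function x ↦ (|u(x)|^{r-1} u(x) − |v(x)|^{r-1} v(x)) · (u(x) − v(x)) is integrable on O and ∫_O (|u|^{r-1} u − |v|^{r-1} v) · (u − v) dx ≥ (1/2) ∫_O |u|^{r-1} |u − v|^2 dx + (1/2) ∫_O |v|^{r-1} |u − v|^2 dx; in particular the left-hand side is nonnegative. -/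
open scoped RealInnerProductSpace
open MeasureTheory


lemma young_like {x y : ℝ} (s t : ℝ) (hx : 0 ≤ x) (hy : 0 ≤ y) (hs : 0 ≤ s) (ht : 0 ≤ t) :
    x ^ s * y ^ t ≤ x ^ (s + t) + y ^ (s + t) := by
  rcases eq_or_ne (s + t) 0 with h | h
  · have hs0 : s = 0 := by linarith
    have ht0 : t = 0 := by linarith
    simp [hs0, ht0]
  rcases le_total x y with hxy | hxy
  · calc x ^ s * y ^ t ≤ y ^ s * y ^ t :=
        mul_le_mul_of_nonneg_right (Real.rpow_le_rpow hx hxy hs) (Real.rpow_nonneg hy t)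
      _ = y ^ (s + t) := (Real.rpow_add' hy h).symm
      _ ≤ x ^ (s + t) + y ^ (s + t) := le_add_of_nonneg_left (Real.rpow_nonneg hx _)
  · calc x ^ s * y ^ t ≤ x ^ s * x ^ t :=
        mul_le_mul_of_nonneg_left (Real.rpow_le_rpow hy hxy ht) (Real.rpow_nonneg hx s)
      _ = x ^ (s + t) := (Real.rpow_add' hx h).symm
      _ ≤ x ^ (s + t) + y ^ (s + t) := le_add_of_nonneg_right (Real.rpow_nonneg hy _)

lemma pointwise_mono {E : Type*} [NormedAddCommGroup E] [InnerProductSpace ℝ E]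
    (r : ℝ) (hr : 1 ≤ r) (a b : E) :
    (1/2) * (‖a‖ ^ (r-1) * ‖a - b‖ ^ 2) + (1/2) * (‖b‖ ^ (r-1) * ‖a - b‖ ^ 2)
      ≤ ⟪‖a‖ ^ (r-1) • a - ‖b‖ ^ (r-1) • b, a - b⟫ := by
  have h1 : ⟪‖a‖ ^ (r-1) • a - ‖b‖ ^ (r-1) • b, a - b⟫
      = ‖a‖ ^ (r-1) * ‖a‖ ^ 2 + ‖b‖ ^ (r-1) * ‖b‖ ^ 2
        - (‖a‖ ^ (r-1) + ‖b‖ ^ (r-1)) * ⟪a, b⟫ := by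
    simp only [inner_sub_left, inner_sub_right, real_inner_smul_left,
      real_inner_self_eq_norm_sq, real_inner_comm b a]
    ring
  have h2 : ‖a - b‖ ^ 2 = ‖a‖ ^ 2 - 2 * ⟪a, b⟫ + ‖b‖ ^ 2 := norm_sub_sq_real a b
  rw [h1, h2]
  have key : 0 ≤ (‖a‖ ^ (r-1) - ‖b‖ ^ (r-1)) * (‖a‖ ^ 2 - ‖b‖ ^ 2) := by
    rcases le_total ‖a‖ ‖b‖ with h | h
    · have h1 := Real.rpow_le_rpow (norm_nonneg a) h (by linarith : (0:ℝ) ≤ r - 1)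
      have h2 := pow_le_pow_left₀ (norm_nonneg a) h 2
      nlinarith
    · have h1 := Real.rpow_le_rpow (norm_nonneg b) h (by linarith : (0:ℝ) ≤ r - 1)
      have h2 := pow_le_pow_left₀ (norm_nonneg b) h 2
      nlinarith
  nlinarith [key]

lemma rpow_mul_bound {x y t : ℝ} (r : ℝ) (hr : 1 ≤ r) (hx : 0 ≤ x) (hy : 0 ≤ y)
    (ht : 0 ≤ t) (htxy : t ≤ x + y) :
    x ^ (r - 1) * t ^ 2 ≤ 4 * (x ^ (r + 1) + y ^ (r + 1)) := by
  have h2x : x ^ (2:ℝ) = x ^ (2:ℕ) := by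
    rw [show (2:ℝ) = ((2:ℕ):ℝ) by norm_num, Real.rpow_natCast]
  have h2y : y ^ (2:ℝ) = y ^ (2:ℕ) := by
    rw [show (2:ℝ) = ((2:ℕ):ℝ) by norm_num, Real.rpow_natCast]
  have hxx : x ^ (r - 1) * x ^ (2:ℕ) = x ^ (r + 1) := by
    rw [← h2x, ← Real.rpow_add' hx (by linarith : r - 1 + 2 ≠ 0)]
    congr 1; ring
  have hxy : x ^ (r - 1) * y ^ (2:ℕ) ≤ x ^ (r + 1) + y ^ (r + 1) := by
    have := young_like (r - 1) 2 hx hy (by linarith) (by norm_num)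
    rw [h2y] at this
    simpa [show r - 1 + 2 = r + 1 by ring] using this
  have ht2 : t ^ 2 ≤ 2 * x ^ 2 + 2 * y ^ 2 := by nlinarith [sq_nonneg (x - y), mul_self_le_mul_self ht htxy, sq_nonneg t]
  have hpos : 0 ≤ x ^ (r - 1) := Real.rpow_nonneg hx _
  have hxp : 0 ≤ x ^ (r + 1) := Real.rpow_nonneg hx _
  have hyp : 0 ≤ y ^ (r + 1) := Real.rpow_nonneg hy _
  nlinarith [mul_le_mul_of_nonneg_left ht2 hpos]

lemma bound_F {E : Type*} [NormedAddCommGroup E] [InnerProductSpace ℝ E]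
    (r : ℝ) (hr : 1 ≤ r) (a b : E) :
    ‖⟪‖a‖ ^ (r-1) • a - ‖b‖ ^ (r-1) • b, a - b⟫‖ ≤ 4 * (‖a‖ ^ (r+1) + ‖b‖ ^ (r+1)) := by
  set x := ‖a‖; set y := ‖b‖
  have hx : 0 ≤ x := norm_nonneg a
  have hy : 0 ≤ y := norm_nonneg b
  have hxr : x ^ (r - 1) * x = x ^ r := by
    have := (Real.rpow_add' hx (by linarith : r - 1 + 1 ≠ 0)).symm
    simpa [Real.rpow_one] using this
  have hyr : y ^ (r - 1) * y = y ^ r := by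
    have := (Real.rpow_add' hy (by linarith : r - 1 + 1 ≠ 0)).symm
    simpa [Real.rpow_one] using this
  have step1 : ‖⟪‖a‖ ^ (r-1) • a - ‖b‖ ^ (r-1) • b, a - b⟫‖
      ≤ (x ^ r + y ^ r) * (x + y) := by
    calc ‖⟪‖a‖ ^ (r-1) • a - ‖b‖ ^ (r-1) • b, a - b⟫‖
        ≤ ‖‖a‖ ^ (r-1) • a - ‖b‖ ^ (r-1) • b‖ * ‖a - b‖ := norm_inner_le_norm _ _
      _ ≤ (x ^ r + y ^ r) * (x + y) := by
          apply mul_le_mul _ (norm_sub_le a b) (norm_nonneg _)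
            (by positivity)
          calc ‖‖a‖ ^ (r-1) • a - ‖b‖ ^ (r-1) • b‖
              ≤ ‖‖a‖ ^ (r-1) • a‖ + ‖‖b‖ ^ (r-1) • b‖ := norm_sub_le _ _
            _ = x ^ r + y ^ r := by
                rw [norm_smul, norm_smul, Real.norm_eq_abs,
                  abs_of_nonneg (Real.rpow_nonneg hx _), Real.norm_eq_abs,
                  abs_of_nonneg (Real.rpow_nonneg hy _), hxr, hyr]
  refine step1.trans ?_
  have hxx : x ^ r * x = x ^ (r + 1) := by
    have := (Real.rpow_add' hx (by linarith : r + 1 ≠ 0)).symm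
    simpa [Real.rpow_one] using this
  have hyy : y ^ r * y = y ^ (r + 1) := by
    have := (Real.rpow_add' hy (by linarith : r + 1 ≠ 0)).symm
    simpa [Real.rpow_one] using this
  have hxy : x ^ r * y ≤ x ^ (r + 1) + y ^ (r + 1) := by
    have := young_like r 1 hx hy (by linarith) zero_le_one
    simpa [Real.rpow_one] using this
  have hyx : y ^ r * x ≤ x ^ (r + 1) + y ^ (r + 1) := by
    have := young_like r 1 hy hx (by linarith) zero_le_one
    simpa [Real.rpow_one, add_comm] using this
  have hxp : 0 ≤ x ^ (r + 1) := Real.rpow_nonneg hx _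
  have hyp : 0 ≤ y ^ (r + 1) := Real.rpow_nonneg hy _
  nlinarith


/-- Integrated monotonicity inequality for the Forchheimer nonlinearity on a
measurable set `O`, for `u, v ∈ L^{r+1}(O; ℝ^d)`; in particular the left-hand
side is nonnegative. -/
theorem forchheimer_integral_monotonicity
    (d : ℕ) (O : Set (EuclideanSpace ℝ (Fin d))) (hO : MeasurableSet O)
    (r : ℝ) (hr : 1 ≤ r)
    (u v : EuclideanSpace ℝ (Fin d) → EuclideanSpace ℝ (Fin d))
    (hu : MemLp u (ENNReal.ofReal (r + 1)) (volume.restrict O))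
    (hv : MemLp v (ENNReal.ofReal (r + 1)) (volume.restrict O)) :
    IntegrableOn
      (fun x => ⟪‖u x‖ ^ (r - 1) • u x - ‖v x‖ ^ (r - 1) • v x, u x - v x⟫) O ∧
    (∫ x in O, ⟪‖u x‖ ^ (r - 1) • u x - ‖v x‖ ^ (r - 1) • v x, u x - v x⟫) ≥
      (1 / 2) * (∫ x in O, ‖u x‖ ^ (r - 1) * ‖u x - v x‖ ^ 2) +
      (1 / 2) * (∫ x in O, ‖v x‖ ^ (r - 1) * ‖u x - v x‖ ^ 2) ∧
    0 ≤ ∫ x in O, ⟪‖u x‖ ^ (r - 1) • u x - ‖v x‖ ^ (r - 1) • v x, u x - v x⟫ := by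
  set μ := volume.restrict O with hμ
  have hr1 : (0:ℝ) < r + 1 := by linarith
  have hum := hu.aestronglyMeasurable
  have hvm := hv.aestronglyMeasurable
  -- the dominating function
  have hgint : Integrable (fun x => ‖u x‖ ^ (r + 1) + ‖v x‖ ^ (r + 1)) μ := by
    have h1 := hu.integrable_norm_rpow (ne_of_gt (ENNReal.ofReal_pos.2 hr1))
      ENNReal.ofReal_ne_top
    have h2 := hv.integrable_norm_rpow (ne_of_gt (ENNReal.ofReal_pos.2 hr1))
      ENNReal.ofReal_ne_top
    rw [ENNReal.toReal_ofReal hr1.le] at h1 h2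
    exact h1.add h2
  -- measurability
  have mru : AEStronglyMeasurable (fun x => ‖u x‖ ^ (r - 1)) μ :=
    (hum.norm.aemeasurable.pow_const (r - 1)).aestronglyMeasurable
  have mrv : AEStronglyMeasurable (fun x => ‖v x‖ ^ (r - 1)) μ :=
    (hvm.norm.aemeasurable.pow_const (r - 1)).aestronglyMeasurable
  have hFm : AEStronglyMeasurable
      (fun x => ⟪‖u x‖ ^ (r - 1) • u x - ‖v x‖ ^ (r - 1) • v x, u x - v x⟫) μ :=
    ((mru.smul hum).sub (mrv.smul hvm)).inner (hum.sub hvm)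
  have hG1m : AEStronglyMeasurable (fun x => ‖u x‖ ^ (r - 1) * ‖u x - v x‖ ^ 2) μ :=
    mru.mul (((hum.sub hvm).norm.aemeasurable.pow_const 2).aestronglyMeasurable)
  have hG2m : AEStronglyMeasurable (fun x => ‖v x‖ ^ (r - 1) * ‖u x - v x‖ ^ 2) μ :=
    mrv.mul (((hum.sub hvm).norm.aemeasurable.pow_const 2).aestronglyMeasurable)
  -- integrability
  have hFint : Integrable
      (fun x => ⟪‖u x‖ ^ (r - 1) • u x - ‖v x‖ ^ (r - 1) • v x, u x - v x⟫) μ := by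
    refine (hgint.const_mul 4).mono' hFm (ae_of_all _ fun x => ?_)
    exact bound_F r hr (u x) (v x)
  have hG1int : Integrable (fun x => ‖u x‖ ^ (r - 1) * ‖u x - v x‖ ^ 2) μ := by
    refine (hgint.const_mul 4).mono' hG1m (ae_of_all _ fun x => ?_)
    rw [Real.norm_eq_abs, abs_of_nonneg (by positivity)]
    exact rpow_mul_bound r hr (norm_nonneg _) (norm_nonneg _) (norm_nonneg _)
      (norm_sub_le _ _)
  have hG2int : Integrable (fun x => ‖v x‖ ^ (r - 1) * ‖u x - v x‖ ^ 2) μ := by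
    refine (hgint.const_mul 4).mono' hG2m (ae_of_all _ fun x => ?_)
    rw [Real.norm_eq_abs, abs_of_nonneg (by positivity)]
    have := rpow_mul_bound r hr (norm_nonneg (v x)) (norm_nonneg (u x))
      (norm_nonneg (u x - v x)) (by rw [add_comm]; exact norm_sub_le _ _)
    linarith
  refine ⟨hFint, ?_, ?_⟩
  · have hmono : ∀ x,
        (1/2) * (‖u x‖ ^ (r - 1) * ‖u x - v x‖ ^ 2)
          + (1/2) * (‖v x‖ ^ (r - 1) * ‖u x - v x‖ ^ 2)
        ≤ ⟪‖u x‖ ^ (r - 1) • u x - ‖v x‖ ^ (r - 1) • v x, u x - v x⟫ :=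
      fun x => pointwise_mono r hr (u x) (v x)
    have h := integral_mono ((hG1int.const_mul (1/2)).add (hG2int.const_mul (1/2)))
      hFint hmono
    simp only [Pi.add_apply] at h
    rw [integral_add (hG1int.const_mul (1/2)) (hG2int.const_mul (1/2)),
      integral_const_mul, integral_const_mul] at h
    exact h
  · have h1 : 0 ≤ ∫ x, ‖u x‖ ^ (r - 1) * ‖u x - v x‖ ^ 2 ∂μ :=
      integral_nonneg fun x => by positivity
    have h2 : 0 ≤ ∫ x, ‖v x‖ ^ (r - 1) * ‖u x - v x‖ ^ 2 ∂μ :=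
      integral_nonneg fun x => by positivity
    have hmono : ∀ x,
        (1/2) * (‖u x‖ ^ (r - 1) * ‖u x - v x‖ ^ 2)
          + (1/2) * (‖v x‖ ^ (r - 1) * ‖u x - v x‖ ^ 2)
        ≤ ⟪‖u x‖ ^ (r - 1) • u x - ‖v x‖ ^ (r - 1) • v x, u x - v x⟫ :=
      fun x => pointwise_mono r hr (u x) (v x)
    have h := integral_mono ((hG1int.const_mul (1/2)).add (hG2int.const_mul (1/2)))
      hFint hmono
    simp only [Pi.add_apply] at h
    rw [integral_add (hG1int.const_mul (1/2)) (hG2int.const_mul (1/2)),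
      integral_const_mul, integral_const_mul] at h
    linarith
end

section
/- Let O ⊆ ℝ^d be a Lebesgue-measurable set, let r ≥ 1 be a real number, and let u, v ∈ L^{r+1}(O;ℝ^d). Then ∫_O (|u|^{r-1} u − |v|^{r-1} v) · (u − v) dx ≥ (1/2^{r-1}) ‖u − v‖_{L^{r+1}(O)}^{r+1}. -/
open scoped RealInnerProductSpace
open MeasureTheory

/-- `x ^ (r-1) * x = x ^ r` for nonnegative `x` and `r ≥ 1` (rpow). -/
private lemma rpow_mul_self {x s : ℝ} (hx : 0 ≤ x) (hs : 0 ≤ s) :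
    x ^ s * x = x ^ (s + 1) := by
  rcases eq_or_lt_of_le hx with h | h
  · rw [← h, mul_zero, eq_comm, Real.zero_rpow (by linarith)]
  · have h2 := Real.rpow_add h s 1
    rw [Real.rpow_one] at h2
    exact h2.symm

private lemma rpow_sub_one_mul {x r : ℝ} (hx : 0 ≤ x) (hr : 1 ≤ r) :
    x ^ (r - 1) * x = x ^ r := by
  rw [rpow_mul_self hx (by linarith), sub_add_cancel]

/-- superadditivity of rpow for exponent ≥ 1 -/
private lemma rpow_superadd {a b r : ℝ} (ha : 0 ≤ a) (hb : 0 ≤ b) (hr : 1 ≤ r) :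
    a ^ r + b ^ r ≤ (a + b) ^ r := by
  have := NNReal.add_rpow_le_rpow_add (a.toNNReal) (b.toNNReal) hr
  have h := (NNReal.coe_le_coe).2 this
  rwa [NNReal.coe_add, NNReal.coe_rpow, NNReal.coe_rpow, NNReal.coe_rpow,
    NNReal.coe_add, Real.coe_toNNReal _ ha, Real.coe_toNNReal _ hb] at h

/-- power-mean inequality: `2^(1-r) * (a+b)^r ≤ a^r + b^r` for `r ≥ 1`. -/
private lemma two_rpow_mean {a b r : ℝ} (ha : 0 ≤ a) (hb : 0 ≤ b) (hr : 1 ≤ r) :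
    2 ^ (1 - r) * (a + b) ^ r ≤ a ^ r + b ^ r := by
  have hc := (convexOn_rpow hr).2 (Set.mem_Ici.2 ha) (Set.mem_Ici.2 hb)
    (by norm_num : (0:ℝ) ≤ 1/2) (by norm_num : (0:ℝ) ≤ 1/2) (by norm_num)
  simp only [smul_eq_mul] at hc
  have h2 : (2:ℝ) ^ (1 - r) = 2 * (1/2 : ℝ) ^ r := by
    rw [one_div, Real.inv_rpow (by norm_num : (0:ℝ) ≤ 2),
      Real.rpow_sub (by norm_num : (0:ℝ) < 2), Real.rpow_one]
    field_simp
  have hab : (1/2 : ℝ) * a + 1/2 * b = (1/2) * (a + b) := by ring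
  have habn : 0 ≤ a + b := by linarith
  rw [hab, Real.mul_rpow (by norm_num : (0:ℝ) ≤ 1/2) habn] at hc
  -- hc : (1/2)^r * (a+b)^r ≤ 1/2 * a^r + 1/2 * b^r
  rw [h2]
  linarith [hc]

/-- Key scalar inequality, assuming `y ≤ x`. -/
private lemma key_scalar_aux {r x y D : ℝ} (hr : 1 ≤ r) (hy : 0 ≤ y) (hyx : y ≤ x)
    (hD : 0 ≤ D) (h1 : (x - y) ^ 2 ≤ D ^ 2) (h2 : D ≤ x + y) :
    2 ^ (1 - r) * D ^ (r + 1) ≤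
      (x ^ (r - 1) - y ^ (r - 1)) * (x ^ 2 - y ^ 2) / 2
        + (x ^ (r - 1) + y ^ (r - 1)) * D ^ 2 / 2 := by
  have hx : 0 ≤ x := le_trans hy hyx
  set q : ℝ := (r + 1) / 2 with hqdef
  have hq : 1 ≤ q := by rw [hqdef]; linarith
  set C : ℝ := (x ^ (r - 1) - y ^ (r - 1)) * (x ^ 2 - y ^ 2) / 2 with hC
  set A : ℝ := (x ^ (r - 1) + y ^ (r - 1)) / 2 with hA
  have hyr : y ^ (r - 1) ≤ x ^ (r - 1) := Real.rpow_le_rpow hy hyx (by linarith)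
  have hCpos : 0 ≤ C := by
    rw [hC]
    have : y ^ 2 ≤ x ^ 2 := by nlinarith
    have := mul_nonneg (sub_nonneg.2 hyr) (sub_nonneg.2 this)
    linarith
  have hApos : 0 ≤ A := by
    rw [hA]
    have := Real.rpow_nonneg hx (r - 1)
    have := Real.rpow_nonneg hy (r - 1)
    linarith
  -- rewrite D ^ (r+1) = (D^2) ^ q
  have hDpow : D ^ (r + 1) = (D ^ 2 : ℝ) ^ q := by
    rw [← Real.rpow_natCast D 2, ← Real.rpow_mul hD]
    norm_num
    rw [hqdef]; ring_nf
  -- endpoint facts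
  have hxr1x : x ^ (r - 1) * x = x ^ r := rpow_sub_one_mul hx hr
  have hyr1y : y ^ (r - 1) * y = y ^ r := rpow_sub_one_mul hy hr
  have hxyq : (((x + y) ^ 2 : ℝ)) ^ q = (x + y) ^ (r + 1) := by
    rw [← Real.rpow_natCast (x + y) 2, ← Real.rpow_mul (by linarith)]
    norm_num
    rw [hqdef]; ring_nf
  have hxymq : (((x - y) ^ 2 : ℝ)) ^ q = (x - y) ^ (r + 1) := by
    rw [← Real.rpow_natCast (x - y) 2, ← Real.rpow_mul (by linarith)]
    norm_num
    rw [hqdef]; ring_nf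
  have hsum : x ^ (r - 1) * x + x ^ r = 2 * x ^ r := by rw [hxr1x]; ring
  -- endpoint 2 : at s₂ = (x+y)^2
  have E2 : 2 ^ (1 - r) * (((x + y) ^ 2 : ℝ)) ^ q ≤ C + A * (x + y) ^ 2 := by
    rw [hxyq]
    have key : 2 ^ (1 - r) * (x + y) ^ r ≤ x ^ r + y ^ r := two_rpow_mean hx hy hr
    have hrp1 : (x + y) ^ (r + 1) = (x + y) ^ r * (x + y) :=
      (rpow_mul_self (by linarith) (by linarith)).symm
    have hCA : C + A * (x + y) ^ 2 = (x ^ r + y ^ r) * (x + y) := by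
      rw [hC, hA, ← hxr1x, ← hyr1y]; ring
    rw [hCA, hrp1]
    have h2p : (0:ℝ) < 2 ^ (1 - r) := Real.rpow_pos_of_pos (by norm_num) _
    calc 2 ^ (1 - r) * ((x + y) ^ r * (x + y))
        = (2 ^ (1 - r) * (x + y) ^ r) * (x + y) := by ring
      _ ≤ (x ^ r + y ^ r) * (x + y) := by
          apply mul_le_mul_of_nonneg_right key (by linarith)
  -- endpoint 1 : at s₁ = (x-y)^2
  have E1 : 2 ^ (1 - r) * (((x - y) ^ 2 : ℝ)) ^ q ≤ C + A * (x - y) ^ 2 := by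
    rw [hxymq]
    have hxy0 : 0 ≤ x - y := by linarith
    have key : (x - y) ^ r + y ^ r ≤ x ^ r := by
      have := rpow_superadd hxy0 hy hr
      simpa using this
    have hrp1 : (x - y) ^ (r + 1) = (x - y) ^ r * (x - y) :=
      (rpow_mul_self hxy0 (by linarith)).symm
    have hCA : C + A * (x - y) ^ 2 = (x ^ r - y ^ r) * (x - y) := by
      rw [hC, hA, ← hxr1x, ← hyr1y]; ring
    rw [hCA, hrp1]
    have h21 : (2:ℝ) ^ (1 - r) ≤ 1 := by
      rw [← Real.rpow_zero 2]
      exact Real.rpow_le_rpow_of_exponent_le (by norm_num) (by linarith)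
    have h2p : (0:ℝ) ≤ 2 ^ (1 - r) := (Real.rpow_pos_of_pos (by norm_num) _).le
    have hxyr : 0 ≤ (x - y) ^ r := Real.rpow_nonneg hxy0 r
    have hstep : (x - y) ^ r ≤ x ^ r - y ^ r := by
      have := Real.rpow_nonneg hy r
      linarith
    calc 2 ^ (1 - r) * ((x - y) ^ r * (x - y))
        ≤ 1 * ((x - y) ^ r * (x - y)) := by
          apply mul_le_mul_of_nonneg_right h21 (mul_nonneg hxyr hxy0)
      _ = (x - y) ^ r * (x - y) := by ring
      _ ≤ (x ^ r - y ^ r) * (x - y) := mul_le_mul_of_nonneg_right hstep hxy0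
  -- convexity interpolation in s = D^2
  rw [hDpow]
  set s₁ : ℝ := (x - y) ^ 2 with hs1
  set s₂ : ℝ := (x + y) ^ 2 with hs2
  have hs1n : 0 ≤ s₁ := sq_nonneg _
  have hs2n : 0 ≤ s₂ := sq_nonneg _
  have hsle : s₁ ≤ D ^ 2 := h1
  have hsle2 : D ^ 2 ≤ s₂ := by
    rw [hs2]
    nlinarith
  have hgoal : C + A * D ^ 2
      = (x ^ (r - 1) - y ^ (r - 1)) * (x ^ 2 - y ^ 2) / 2
        + (x ^ (r - 1) + y ^ (r - 1)) * D ^ 2 / 2 := by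
    rw [hC, hA]; ring
  rw [← hgoal]
  by_cases hss : s₂ ≤ s₁
  · have h12 : s₁ = D ^ 2 := le_antisymm hsle (le_trans hsle2 hss)
    calc 2 ^ (1 - r) * (D ^ 2 : ℝ) ^ q = 2 ^ (1 - r) * (s₁ : ℝ) ^ q := by rw [h12]
      _ ≤ C + A * s₁ := E1
      _ ≤ C + A * D ^ 2 := by
          have := mul_le_mul_of_nonneg_left hsle hApos
          linarith
  · push_neg at hss
    have hden : 0 < s₂ - s₁ := by linarith
    set a : ℝ := (s₂ - D ^ 2) / (s₂ - s₁) with hadef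
    set b : ℝ := (D ^ 2 - s₁) / (s₂ - s₁) with hbdef
    have ha : 0 ≤ a := div_nonneg (by linarith) hden.le
    have hb : 0 ≤ b := div_nonneg (by linarith) hden.le
    have hab : a + b = 1 := by
      rw [hadef, hbdef, ← add_div, div_eq_one_iff_eq hden.ne']
      ring
    have hcomb : a * s₁ + b * s₂ = D ^ 2 := by
      rw [hadef, hbdef]
      field_simp
      ring
    have hc := (convexOn_rpow hq).2 (Set.mem_Ici.2 hs1n) (Set.mem_Ici.2 hs2n) ha hb hab
    simp only [smul_eq_mul] at hc
    rw [hcomb] at hc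
    -- hc : (D^2)^q ≤ a * s₁^q + b * s₂^q
    have h2p : (0:ℝ) ≤ 2 ^ (1 - r) := (Real.rpow_pos_of_pos (by norm_num) _).le
    have hE1' := mul_le_mul_of_nonneg_left E1 ha
    have hE2' := mul_le_mul_of_nonneg_left E2 hb
    have hmain : 2 ^ (1 - r) * (D ^ 2 : ℝ) ^ q
        ≤ a * (C + A * s₁) + b * (C + A * s₂) := by
      calc 2 ^ (1 - r) * (D ^ 2 : ℝ) ^ q
          ≤ 2 ^ (1 - r) * (a * s₁ ^ q + b * s₂ ^ q) :=
            mul_le_mul_of_nonneg_left hc h2p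
        _ = a * (2 ^ (1 - r) * s₁ ^ q) + b * (2 ^ (1 - r) * s₂ ^ q) := by ring
        _ ≤ a * (C + A * s₁) + b * (C + A * s₂) := by linarith
    have hsplit : a * (C + A * s₁) + b * (C + A * s₂) = C + A * D ^ 2 := by
      calc a * (C + A * s₁) + b * (C + A * s₂)
          = (a + b) * C + A * (a * s₁ + b * s₂) := by ring
        _ = C + A * D ^ 2 := by rw [hab, hcomb, one_mul]
    linarith [hmain]

/-- Pointwise strong monotonicity for the Forchheimer nonlinearity. -/
private lemma key_vec {E : Type*} [NormedAddCommGroup E] [InnerProductSpace ℝ E]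
    {r : ℝ} (hr : 1 ≤ r) (a b : E) :
    2 ^ (1 - r) * ‖a - b‖ ^ (r + 1) ≤ ⟪‖a‖ ^ (r - 1) • a - ‖b‖ ^ (r - 1) • b, a - b⟫ := by
  have hinner : ⟪‖a‖ ^ (r - 1) • a - ‖b‖ ^ (r - 1) • b, a - b⟫
      = (‖a‖ ^ (r - 1) - ‖b‖ ^ (r - 1)) * (‖a‖ ^ 2 - ‖b‖ ^ 2) / 2
        + (‖a‖ ^ (r - 1) + ‖b‖ ^ (r - 1)) * ‖a - b‖ ^ 2 / 2 := by
    have hab : ⟪a, b⟫ = (‖a‖ ^ 2 + ‖b‖ ^ 2 - ‖a - b‖ ^ 2) / 2 := by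
      have := @norm_sub_sq_real E _ _ a b
      linarith
    rw [inner_sub_left, real_inner_smul_left, real_inner_smul_left,
      inner_sub_right, inner_sub_right, real_inner_self_eq_norm_sq,
      real_inner_self_eq_norm_sq, real_inner_comm a b, hab]
    ring
  rw [hinner]
  have hsq1 : (‖a‖ - ‖b‖) ^ 2 ≤ ‖a - b‖ ^ 2 := by
    have h1 := pow_le_pow_left₀ (abs_nonneg (‖a‖ - ‖b‖)) (abs_norm_sub_norm_le a b) 2
    rwa [sq_abs] at h1
  have hsq2 : (‖b‖ - ‖a‖) ^ 2 ≤ ‖a - b‖ ^ 2 := by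
    have h1 := pow_le_pow_left₀ (abs_nonneg (‖b‖ - ‖a‖)) (abs_norm_sub_norm_le b a) 2
    rwa [sq_abs, norm_sub_rev] at h1
  rcases le_total ‖b‖ ‖a‖ with h | h
  · exact key_scalar_aux hr (norm_nonneg b) h (norm_nonneg _) hsq1 (norm_sub_le a b)
  · have := key_scalar_aux hr (norm_nonneg a) h (norm_nonneg (a - b))
      hsq2 (by rw [norm_sub_rev] at *; exact norm_sub_le b a)
    calc 2 ^ (1 - r) * ‖a - b‖ ^ (r + 1)
        ≤ (‖b‖ ^ (r - 1) - ‖a‖ ^ (r - 1)) * (‖b‖ ^ 2 - ‖a‖ ^ 2) / 2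
          + (‖b‖ ^ (r - 1) + ‖a‖ ^ (r - 1)) * ‖a - b‖ ^ 2 / 2 := this
      _ = (‖a‖ ^ (r - 1) - ‖b‖ ^ (r - 1)) * (‖a‖ ^ 2 - ‖b‖ ^ 2) / 2
          + (‖a‖ ^ (r - 1) + ‖b‖ ^ (r - 1)) * ‖a - b‖ ^ 2 / 2 := by ring

/-- `x^r * y ≤ x^(r+1) + y^(r+1)` for nonnegatives. -/
private lemma rpow_mul_le {x y r : ℝ} (hx : 0 ≤ x) (hy : 0 ≤ y) (hr : 1 ≤ r) :
    x ^ r * y ≤ x ^ (r + 1) + y ^ (r + 1) := by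
  have hx1 : x ^ r * x = x ^ (r + 1) := rpow_mul_self hx (by linarith)
  have hy1 : y ^ r * y = y ^ (r + 1) := rpow_mul_self hy (by linarith)
  rcases le_total x y with h | h
  · have : x ^ r ≤ y ^ r := Real.rpow_le_rpow hx h (by linarith)
    have h2 : x ^ r * y ≤ y ^ r * y := mul_le_mul_of_nonneg_right this hy
    have := Real.rpow_nonneg hx (r + 1)
    linarith [hy1 ▸ h2]
  · have h2 : x ^ r * y ≤ x ^ r * x :=
      mul_le_mul_of_nonneg_left h (Real.rpow_nonneg hx r)
    have := Real.rpow_nonneg hy (r + 1)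
    linarith [hx1 ▸ h2]

/-- Integrated strong monotonicity inequality for the Forchheimer nonlinearity on a
measurable set `O`, for `u, v ∈ L^{r+1}(O; ℝ^d)`. -/
theorem forchheimer_integral_strong_monotonicity
    (d : ℕ) (O : Set (EuclideanSpace ℝ (Fin d))) (hO : MeasurableSet O)
    (r : ℝ) (hr : 1 ≤ r)
    (u v : EuclideanSpace ℝ (Fin d) → EuclideanSpace ℝ (Fin d))
    (hu : MemLp u (ENNReal.ofReal (r + 1)) (volume.restrict O))
    (hv : MemLp v (ENNReal.ofReal (r + 1)) (volume.restrict O)) :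
    (∫ x in O, ⟪‖u x‖ ^ (r - 1) • u x - ‖v x‖ ^ (r - 1) • v x, u x - v x⟫) ≥
      (1 / 2 ^ (r - 1)) *
        ((∫ x in O, ‖u x - v x‖ ^ (r + 1)) ^ (1 / (r + 1))) ^ (r + 1) := by
  have hr1 : (0:ℝ) < r + 1 := by linarith
  set μ := volume.restrict O with hμ
  have hp0 : ENNReal.ofReal (r + 1) ≠ 0 := by
    simp [ENNReal.ofReal_eq_zero]; linarith
  have hpt : ENNReal.ofReal (r + 1) ≠ ⊤ := ENNReal.ofReal_ne_top
  have htoReal : (ENNReal.ofReal (r + 1)).toReal = r + 1 :=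
    ENNReal.toReal_ofReal hr1.le
  -- integrability of the power norms
  have hIu : Integrable (fun x => ‖u x‖ ^ (r + 1)) μ := by
    have := hu.integrable_norm_rpow hp0 hpt
    rwa [htoReal] at this
  have hIv : Integrable (fun x => ‖v x‖ ^ (r + 1)) μ := by
    have := hv.integrable_norm_rpow hp0 hpt
    rwa [htoReal] at this
  have hIuv : Integrable (fun x => ‖u x - v x‖ ^ (r + 1)) μ := by
    have := (hu.sub hv).integrable_norm_rpow hp0 hpt
    rwa [htoReal] at this
  -- a.e. strong measurability of the integrand
  have hmu : AEStronglyMeasurable u μ := hu.1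
  have hmv : AEStronglyMeasurable v μ := hv.1
  have hF : AEStronglyMeasurable
      (fun x => (‖u x‖ ^ (r - 1)) • u x - (‖v x‖ ^ (r - 1)) • v x) μ := by
    have hcont : Continuous (fun t : ℝ => t ^ (r - 1)) :=
      Real.continuous_rpow_const (by linarith)
    apply AEStronglyMeasurable.sub
    · exact (hcont.comp_aestronglyMeasurable hmu.norm).smul hmu
    · exact (hcont.comp_aestronglyMeasurable hmv.norm).smul hmv
  have hf : AEStronglyMeasurable
      (fun x => ⟪‖u x‖ ^ (r - 1) • u x - ‖v x‖ ^ (r - 1) • v x, u x - v x⟫) μ :=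
    hF.inner (hmu.sub hmv)
  -- integrability of the inner product integrand
  have hIf : Integrable
      (fun x => ⟪‖u x‖ ^ (r - 1) • u x - ‖v x‖ ^ (r - 1) • v x, u x - v x⟫) μ := by
    apply Integrable.mono'
      ((hIu.add hIv).add ((hIu.add hIv).add (hIu.add hIv))) hf
    filter_upwards with x
    set a := u x
    set b := v x
    have hna : 0 ≤ ‖a‖ := norm_nonneg a
    have hnb : 0 ≤ ‖b‖ := norm_nonneg b
    have hax : ‖a‖ ^ (r - 1) * ‖a‖ = ‖a‖ ^ r := rpow_sub_one_mul hna hr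
    have hbx : ‖b‖ ^ (r - 1) * ‖b‖ = ‖b‖ ^ r := rpow_sub_one_mul hnb hr
    calc ‖⟪‖a‖ ^ (r - 1) • a - ‖b‖ ^ (r - 1) • b, a - b⟫‖
        ≤ ‖(‖a‖ ^ (r - 1)) • a - (‖b‖ ^ (r - 1)) • b‖ * ‖a - b‖ :=
          norm_inner_le_norm _ _
      _ ≤ (‖(‖a‖ ^ (r - 1)) • a‖ + ‖(‖b‖ ^ (r - 1)) • b‖) * (‖a‖ + ‖b‖) := by
          apply mul_le_mul (norm_sub_le _ _) (norm_sub_le a b) (norm_nonneg _)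
          positivity
      _ = (‖a‖ ^ r + ‖b‖ ^ r) * (‖a‖ + ‖b‖) := by
          rw [norm_smul, norm_smul, Real.norm_eq_abs, Real.norm_eq_abs,
            abs_of_nonneg (Real.rpow_nonneg hna _),
            abs_of_nonneg (Real.rpow_nonneg hnb _), hax, hbx]
      _ ≤ (‖a‖ ^ (r + 1) + ‖b‖ ^ (r + 1)) +
          ((‖a‖ ^ (r + 1) + ‖b‖ ^ (r + 1)) + (‖a‖ ^ (r + 1) + ‖b‖ ^ (r + 1))) := by
          have h1 : ‖a‖ ^ r * ‖a‖ = ‖a‖ ^ (r + 1) := rpow_mul_self hna (by linarith)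
          have h2 : ‖b‖ ^ r * ‖b‖ = ‖b‖ ^ (r + 1) := rpow_mul_self hnb (by linarith)
          have h3 := rpow_mul_le hna hnb hr
          have h4 := rpow_mul_le hnb hna hr
          nlinarith [h3, h4]
  -- nonnegativity of ∫ ‖u - v‖^(r+1)
  have hInonneg : 0 ≤ ∫ x in O, ‖u x - v x‖ ^ (r + 1) := by
    apply integral_nonneg
    intro x
    exact Real.rpow_nonneg (norm_nonneg _) _
  -- collapse the nested rpow on the RHS
  have hcollapse : ((∫ x in O, ‖u x - v x‖ ^ (r + 1)) ^ (1 / (r + 1))) ^ (r + 1)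
      = ∫ x in O, ‖u x - v x‖ ^ (r + 1) := by
    rw [← Real.rpow_mul hInonneg, one_div, inv_mul_cancel₀ hr1.ne']
    exact Real.rpow_one _
  rw [hcollapse]
  have hconst : (1 / 2 ^ (r - 1) : ℝ) = 2 ^ (1 - r) := by
    rw [one_div, ← Real.rpow_neg (by norm_num), neg_sub]
  rw [hconst]
  -- pointwise bound integrated
  have hmono : ∫ x in O, 2 ^ (1 - r) * ‖u x - v x‖ ^ (r + 1) ≤
      ∫ x in O, ⟪‖u x‖ ^ (r - 1) • u x - ‖v x‖ ^ (r - 1) • v x, u x - v x⟫ := by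
    apply integral_mono (hIuv.const_mul _) hIf
    intro x
    exact key_vec hr (u x) (v x)
  rw [integral_const_mul] at hmono
  exact hmono
end

section
/- Let O ⊆ ℝ^d be a Lebesgue-measurable set, let r ≥ 1 be a real number, and let u₁, u₂, v ∈ L^{r+1}(O;ℝ^d). Then the function (|u₁|^{r-1}u₁ − |u₂|^{r-1}u₂)·v is integrable on O and | ∫_O (|u₁|^{r-1} u₁ − |u₂|^{r-1} u₂) · v dx | ≤ r (‖u₁‖_{L^{r+1}(O)} + ‖u₂‖_{L^{r+1}(O)})^{r-1} ‖u₁ − u₂‖_{L^{r+1}(O)} ‖v‖_{L^{r+1}(O)}. -/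
open scoped RealInnerProductSpace
open MeasureTheory

open Real
open scoped ENNReal

private lemma aux_scalar (r : ℝ) (hr : 1 ≤ r) {s t : ℝ} (ht : 0 ≤ t) (hts : t ≤ s) :
    (s ^ (r - 1) - t ^ (r - 1)) * t ≤ (r - 1) * s ^ (r - 1) * (s - t) := by
  have hs : 0 ≤ s := ht.trans hts
  have hp : 0 ≤ r - 1 := by linarith
  rcases eq_or_lt_of_le ht with h0 | ht0
  · rw [← h0, mul_zero]
    have h1 := Real.rpow_nonneg hs (r - 1)
    have := mul_nonneg (mul_nonneg hp h1) (by linarith : (0:ℝ) ≤ s - 0)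
    linarith
  have hs0 : 0 < s := lt_of_lt_of_le ht0 hts
  have htp : (0:ℝ) < t ^ (r - 1) := Real.rpow_pos_of_pos ht0 _
  have hsp : (0:ℝ) < s ^ (r - 1) := Real.rpow_pos_of_pos hs0 _
  have hmono : t ^ (r - 1) ≤ s ^ (r - 1) := Real.rpow_le_rpow ht hts hp
  rcases le_or_gt (r - 1) 1 with hp1 | hp1
  · -- concave case: use (1+x)^p ≤ 1 + p x with 1+x = s/t
    have hx : (-1:ℝ) ≤ s / t - 1 := by
      have : 0 ≤ s / t := div_nonneg hs ht
      linarith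
    have hbern := rpow_one_add_le_one_add_mul_self hx hp hp1
    rw [add_sub_cancel] at hbern
    -- (s/t)^(r-1) ≤ 1 + (r-1) * (s/t - 1)
    have hst : (s / t) ^ (r - 1) * t ^ (r - 1) = s ^ (r - 1) := by
      rw [← Real.mul_rpow (div_nonneg hs ht) ht]
      rw [div_mul_cancel₀ _ ht0.ne']
    have h5 : t * (s / t - 1) = s - t := by field_simp
    have key : s ^ (r - 1) - t ^ (r - 1) ≤ (r - 1) * t ^ (r - 1) * (s / t - 1) := by
      nlinarith [mul_le_mul_of_nonneg_right hbern htp.le]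
    have h6 : (s ^ (r - 1) - t ^ (r - 1)) * t ≤ (r - 1) * t ^ (r - 1) * (s - t) := by
      have hk := mul_le_mul_of_nonneg_right key ht
      have he : (r - 1) * t ^ (r - 1) * (s / t - 1) * t = (r - 1) * t ^ (r - 1) * (s - t) := by
        rw [← h5]; ring
      linarith
    nlinarith [mul_le_mul_of_nonneg_right hmono (mul_nonneg hp (by linarith : (0:ℝ) ≤ s - t))]
  · -- convex case: Bernoulli lower bound with 1+x = t/s
    have hx : (-1:ℝ) ≤ t / s - 1 := by
      have : 0 ≤ t / s := div_nonneg ht hs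
      linarith
    have hbern := one_add_mul_self_le_rpow_one_add hx hp1.le
    rw [add_sub_cancel] at hbern
    -- 1 + (r-1)*(t/s - 1) ≤ (t/s)^(r-1)
    have hst : (t / s) ^ (r - 1) * s ^ (r - 1) = t ^ (r - 1) := by
      rw [← Real.mul_rpow (div_nonneg ht hs) hs]
      rw [div_mul_cancel₀ _ hs0.ne']
    have h5 : s * (t / s - 1) = t - s := by field_simp
    have key : s ^ (r - 1) - t ^ (r - 1) ≤ (r - 1) * s ^ (r - 1) * (1 - t / s) := by
      nlinarith [mul_le_mul_of_nonneg_right hbern hsp.le]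
    have hts1 : t / s ≤ 1 := (div_le_one hs0).mpr hts
    have h6 : (s ^ (r - 1) - t ^ (r - 1)) * t ≤ (r - 1) * s ^ (r - 1) * (1 - t / s) * s := by
      nlinarith [mul_le_mul_of_nonneg_right key ht, mul_nonneg (mul_nonneg hp hsp.le) (by linarith : (0:ℝ) ≤ 1 - t/s)]
    calc (s ^ (r - 1) - t ^ (r - 1)) * t ≤ (r - 1) * s ^ (r - 1) * (1 - t / s) * s := h6
      _ = (r - 1) * s ^ (r - 1) * (s - t) := by
          have he : s * (1 - t / s) = s - t := by field_simp
          rw [← he]; ring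

private lemma aux_vec' {E : Type*} [NormedAddCommGroup E] [NormedSpace ℝ E] (r : ℝ) (hr : 1 ≤ r)
    (a b : E) (hba : ‖b‖ ≤ ‖a‖) :
    ‖‖a‖ ^ (r - 1) • a - ‖b‖ ^ (r - 1) • b‖ ≤ r * (‖a‖ + ‖b‖) ^ (r - 1) * ‖a - b‖ := by
  have hp : (0:ℝ) ≤ r - 1 := by linarith
  have hmono : ‖b‖ ^ (r - 1) ≤ ‖a‖ ^ (r - 1) := Real.rpow_le_rpow (norm_nonneg b) hba hp
  have hid : ‖a‖ ^ (r - 1) • a - ‖b‖ ^ (r - 1) • b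
      = ‖a‖ ^ (r - 1) • (a - b) + (‖a‖ ^ (r - 1) - ‖b‖ ^ (r - 1)) • b := by
    module
  calc ‖‖a‖ ^ (r - 1) • a - ‖b‖ ^ (r - 1) • b‖
      ≤ ‖‖a‖ ^ (r - 1) • (a - b)‖ + ‖(‖a‖ ^ (r - 1) - ‖b‖ ^ (r - 1)) • b‖ := by
        rw [hid]; exact norm_add_le _ _
    _ = ‖a‖ ^ (r - 1) * ‖a - b‖ + (‖a‖ ^ (r - 1) - ‖b‖ ^ (r - 1)) * ‖b‖ := by
        rw [norm_smul, norm_smul, Real.norm_of_nonneg (Real.rpow_nonneg (norm_nonneg a) _),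
          Real.norm_of_nonneg (by linarith : (0:ℝ) ≤ ‖a‖ ^ (r - 1) - ‖b‖ ^ (r - 1))]
    _ ≤ ‖a‖ ^ (r - 1) * ‖a - b‖ + (r - 1) * ‖a‖ ^ (r - 1) * (‖a‖ - ‖b‖) :=
        add_le_add_right (aux_scalar r hr (norm_nonneg b) hba) _
    _ ≤ ‖a‖ ^ (r - 1) * ‖a - b‖ + (r - 1) * ‖a‖ ^ (r - 1) * ‖a - b‖ := by
        have := norm_sub_norm_le a b
        have h0 : (0:ℝ) ≤ (r-1) * ‖a‖ ^ (r-1) := mul_nonneg hp (Real.rpow_nonneg (norm_nonneg a) _)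
        nlinarith
    _ = r * ‖a‖ ^ (r - 1) * ‖a - b‖ := by ring
    _ ≤ r * (‖a‖ + ‖b‖) ^ (r - 1) * ‖a - b‖ := by
        have h1 : ‖a‖ ^ (r-1) ≤ (‖a‖ + ‖b‖) ^ (r - 1) :=
          Real.rpow_le_rpow (norm_nonneg a) (by linarith [norm_nonneg b]) hp
        have h2 : (0:ℝ) ≤ r := by linarith
        have h3 := norm_nonneg (a - b)
        exact mul_le_mul_of_nonneg_right (mul_le_mul_of_nonneg_left h1 h2) h3

private lemma aux_vec {E : Type*} [NormedAddCommGroup E] [NormedSpace ℝ E] (r : ℝ) (hr : 1 ≤ r)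
    (a b : E) :
    ‖‖a‖ ^ (r - 1) • a - ‖b‖ ^ (r - 1) • b‖ ≤ r * (‖a‖ + ‖b‖) ^ (r - 1) * ‖a - b‖ := by
  rcases le_total ‖b‖ ‖a‖ with h | h
  · exact aux_vec' r hr a b h
  · have := aux_vec' r hr b a h
    rw [← norm_neg, neg_sub] at this
    rw [← norm_neg (a - b), neg_sub]
    calc ‖‖a‖ ^ (r - 1) • a - ‖b‖ ^ (r - 1) • b‖
        = ‖‖b‖ ^ (r - 1) • b - ‖a‖ ^ (r - 1) • a‖ := by rw [← norm_neg, neg_sub]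
      _ ≤ r * (‖b‖ + ‖a‖) ^ (r - 1) * ‖b - a‖ := aux_vec' r hr b a h
      _ = r * (‖a‖ + ‖b‖) ^ (r - 1) * ‖b - a‖ := by rw [add_comm]

private lemma ofReal_exp_add {a b c : ℝ} (ha : 0 < a) (hb : 0 < b) (hc : 0 < c)
    (h : a⁻¹ = b⁻¹ + c⁻¹) :
    1 / ENNReal.ofReal a = 1 / ENNReal.ofReal b + 1 / ENNReal.ofReal c := by
  rw [one_div, one_div, one_div, ← ENNReal.ofReal_inv_of_pos ha, ← ENNReal.ofReal_inv_of_pos hb,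
    ← ENNReal.ofReal_inv_of_pos hc, ← ENNReal.ofReal_add (by positivity) (by positivity), h]

/-- Local Lipschitz estimate for the Forchheimer form: for `u₁, u₂, v ∈ L^{r+1}(O;ℝ^d)`,
`|∫_O (|u₁|^{r-1}u₁ − |u₂|^{r-1}u₂)·v| ≤ r (‖u₁‖ + ‖u₂‖)^{r-1} ‖u₁ − u₂‖ ‖v‖`
in `L^{r+1}(O)` norms. -/
theorem forchheimer_form_lipschitz
    (d : ℕ) (O : Set (EuclideanSpace ℝ (Fin d))) (hO : MeasurableSet O)
    (r : ℝ) (hr : 1 ≤ r)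
    (u₁ u₂ v : EuclideanSpace ℝ (Fin d) → EuclideanSpace ℝ (Fin d))
    (hu₁ : MemLp u₁ (ENNReal.ofReal (r + 1)) (volume.restrict O))
    (hu₂ : MemLp u₂ (ENNReal.ofReal (r + 1)) (volume.restrict O))
    (hv : MemLp v (ENNReal.ofReal (r + 1)) (volume.restrict O)) :
    IntegrableOn
      (fun x => ⟪‖u₁ x‖ ^ (r - 1) • u₁ x - ‖u₂ x‖ ^ (r - 1) • u₂ x, v x⟫) O ∧
    |∫ x in O, ⟪‖u₁ x‖ ^ (r - 1) • u₁ x - ‖u₂ x‖ ^ (r - 1) • u₂ x, v x⟫| ≤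
      r * ((∫ x in O, ‖u₁ x‖ ^ (r + 1)) ^ (1 / (r + 1)) +
            (∫ x in O, ‖u₂ x‖ ^ (r + 1)) ^ (1 / (r + 1))) ^ (r - 1) *
        (∫ x in O, ‖u₁ x - u₂ x‖ ^ (r + 1)) ^ (1 / (r + 1)) *
        (∫ x in O, ‖v x‖ ^ (r + 1)) ^ (1 / (r + 1)) := by
  have hr1 : (0:ℝ) < r + 1 := by linarith
  have hr0 : (0:ℝ) < r := by linarith
  set μ := volume.restrict O with hμdef
  set p1 := ENNReal.ofReal (r + 1) with hp1def
  set A : EuclideanSpace ℝ (Fin d) → ℝ := fun x => ‖u₁ x‖ + ‖u₂ x‖ with hAdef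
  set B : EuclideanSpace ℝ (Fin d) → ℝ := fun x => ‖u₁ x - u₂ x‖ with hBdef
  set C : EuclideanSpace ℝ (Fin d) → ℝ := fun x => ‖v x‖ with hCdef
  set φ : EuclideanSpace ℝ (Fin d) → ℝ :=
    fun x => ⟪‖u₁ x‖ ^ (r - 1) • u₁ x - ‖u₂ x‖ ^ (r - 1) • u₂ x, v x⟫ with hφdef
  have hA : MemLp A p1 μ := hu₁.norm.add hu₂.norm
  have hB : MemLp B p1 μ := (hu₁.sub hu₂).norm
  have hC : MemLp C p1 μ := hv.norm
  have hA0 : ∀ x, 0 ≤ A x := fun x => add_nonneg (norm_nonneg _) (norm_nonneg _)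
  have hf : MemLp (fun x => A x ^ (r - 1) * B x) (ENNReal.ofReal ((r + 1) / r)) μ := by
    rcases eq_or_lt_of_le hr with hre | hrlt
    · have hfun : (fun x => A x ^ (r - 1) * B x) = B := by
        funext x
        rw [← hre]
        norm_num
      have hexp : (r + 1) / r = r + 1 := by rw [← hre]; norm_num
      rw [hfun, hexp]
      exact hB
    · have hq := hA.norm_rpow_div (ENNReal.ofReal (r - 1))
      have ht : (ENNReal.ofReal (r - 1)).toReal = r - 1 := ENNReal.toReal_ofReal (by linarith)
      rw [ht] at hq
      have hfun : (fun x : EuclideanSpace ℝ (Fin d) => ‖A x‖ ^ (r - 1)) =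
          (fun x => A x ^ (r - 1)) := by
        funext x
        rw [Real.norm_of_nonneg (hA0 x)]
      rw [hfun] at hq
      have hdiv : p1 / ENNReal.ofReal (r - 1) = ENNReal.ofReal ((r + 1) / (r - 1)) := by
        rw [ENNReal.ofReal_div_of_pos (by linarith)]
      rw [hdiv] at hq
      have hexp : 1 / ENNReal.ofReal ((r + 1) / r) =
          1 / ENNReal.ofReal ((r + 1) / (r - 1)) + 1 / p1 := by
        rw [hp1def]
        refine ofReal_exp_add (div_pos hr1 hr0) (div_pos hr1 (by linarith)) hr1 ?_
        have h1 : r + 1 ≠ 0 := by linarith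
        have h2 : r - 1 ≠ 0 := by linarith
        rw [inv_div, inv_div]
        field_simp
        ring
      have := hB.smul hq (r := ENNReal.ofReal ((r + 1) / r)) (hpqr := ⟨by simpa only [one_div] using hexp.symm⟩)
      exact this
  have hfC_int : Integrable (fun x => (A x ^ (r - 1) * B x) * C x) μ := by
    have hexp : (1 : ℝ≥0∞) / 1 = 1 / ENNReal.ofReal ((r + 1) / r) + 1 / p1 := by
      rw [div_one]
      rw [hp1def]
      have := ofReal_exp_add (one_pos) (div_pos hr1 hr0) hr1 (by
        have h1 : r + 1 ≠ 0 := by linarith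
        rw [inv_div, inv_one]
        field_simp)
      rw [ENNReal.ofReal_one] at this
      simpa using this
    have := hC.smul hf (r := 1) (hpqr := ⟨by simpa only [one_div] using hexp.symm⟩)
    exact memLp_one_iff_integrable.mp this
  have hφm : AEStronglyMeasurable φ μ := by
    have h1 : AEStronglyMeasurable (fun x => ‖u₁ x‖ ^ (r - 1) • u₁ x) μ :=
      ((hu₁.1.norm.aemeasurable.pow aemeasurable_const).aestronglyMeasurable).smul hu₁.1
    have h2 : AEStronglyMeasurable (fun x => ‖u₂ x‖ ^ (r - 1) • u₂ x) μ :=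
      ((hu₂.1.norm.aemeasurable.pow aemeasurable_const).aestronglyMeasurable).smul hu₂.1
    exact (h1.sub h2).inner hv.1
  have hpt : ∀ x, |φ x| ≤ r * ((A x ^ (r - 1) * B x) * C x) := by
    intro x
    calc |φ x| ≤ ‖‖u₁ x‖ ^ (r - 1) • u₁ x - ‖u₂ x‖ ^ (r - 1) • u₂ x‖ * ‖v x‖ :=
          abs_real_inner_le_norm _ _
      _ ≤ (r * (‖u₁ x‖ + ‖u₂ x‖) ^ (r - 1) * ‖u₁ x - u₂ x‖) * ‖v x‖ :=
          mul_le_mul_of_nonneg_right (aux_vec r hr _ _) (norm_nonneg _)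
      _ = r * ((A x ^ (r - 1) * B x) * C x) := by ring
  have hint : Integrable φ μ := by
    refine (hfC_int.const_mul r).mono' hφm (ae_of_all _ fun x => ?_)
    simpa [Real.norm_eq_abs] using hpt x
  refine ⟨hint, ?_⟩
  -- notation for the norms
  set NA : ℝ := (∫ x, A x ^ (r + 1) ∂μ) ^ (1 / (r + 1)) with hNAdef
  set NB : ℝ := (∫ x, B x ^ (r + 1) ∂μ) ^ (1 / (r + 1)) with hNBdef
  set NC : ℝ := (∫ x, C x ^ (r + 1) ∂μ) ^ (1 / (r + 1)) with hNCdef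
  set N₁ : ℝ := (∫ x, ‖u₁ x‖ ^ (r + 1) ∂μ) ^ (1 / (r + 1)) with hN1def
  set N₂ : ℝ := (∫ x, ‖u₂ x‖ ^ (r + 1) ∂μ) ^ (1 / (r + 1)) with hN2def
  have hNB0 : 0 ≤ NB := Real.rpow_nonneg
    (integral_nonneg fun x => Real.rpow_nonneg (norm_nonneg _) _) _
  have hNC0 : 0 ≤ NC := Real.rpow_nonneg
    (integral_nonneg fun x => Real.rpow_nonneg (norm_nonneg _) _) _
  have hN120 : 0 ≤ N₁ + N₂ := add_nonneg
    (Real.rpow_nonneg (integral_nonneg fun x => Real.rpow_nonneg (norm_nonneg _) _) _)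
    (Real.rpow_nonneg (integral_nonneg fun x => Real.rpow_nonneg (norm_nonneg _) _) _)
  have hpq1 : Real.HolderConjugate ((r + 1) / r) (r + 1) := by
    refine Real.holderConjugate_iff.mpr ⟨?_, ?_⟩
    · rw [lt_div_iff₀ hr0]; linarith
    · field_simp
  have H1 : ∫ x, (A x ^ (r - 1) * B x) * C x ∂μ ≤
      (∫ x, (A x ^ (r - 1) * B x) ^ ((r + 1) / r) ∂μ) ^ (1 / ((r + 1) / r)) *
        (∫ x, C x ^ (r + 1) ∂μ) ^ (1 / (r + 1)) :=
    integral_mul_le_Lp_mul_Lq_of_nonneg hpq1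
      (ae_of_all _ fun x => mul_nonneg (Real.rpow_nonneg (hA0 x) _) (norm_nonneg _))
      (ae_of_all _ fun x => norm_nonneg _) hf hC
  have H2 : (∫ x, (A x ^ (r - 1) * B x) ^ ((r + 1) / r) ∂μ) ^ (1 / ((r + 1) / r)) ≤
      (∫ x, A x ^ (r + 1) ∂μ) ^ ((r - 1) / (r + 1)) * NB := by
    rw [hNBdef]
    rcases eq_or_lt_of_le hr with hre | hrlt
    · have e1 : (fun x => (A x ^ (r - 1) * B x) ^ ((r + 1) / r)) =
          fun x => B x ^ (r + 1) := by
        funext x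
        rw [← hre]
        norm_num
      have e2 : 1 / ((r + 1) / r) = 1 / (r + 1) := by rw [← hre]; norm_num
      have e3 : (r - 1) / (r + 1) = 0 := by rw [← hre]; norm_num
      rw [e1, e2, e3, Real.rpow_zero, one_mul]
    · have hr1' : (0:ℝ) < r - 1 := by linarith
      have hq1pos : (0:ℝ) < (r - 1) * ((r + 1) / r) := mul_pos hr1' (div_pos hr1 hr0)
      have hF := hA.norm_rpow_div (ENNReal.ofReal ((r - 1) * ((r + 1) / r)))
      rw [ENNReal.toReal_ofReal hq1pos.le] at hF
      have hFfun : (fun x => ‖A x‖ ^ ((r - 1) * ((r + 1) / r))) =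
          fun x => A x ^ ((r - 1) * ((r + 1) / r)) :=
        funext fun x => by rw [Real.norm_of_nonneg (hA0 x)]
      rw [hFfun] at hF
      have hdivF : p1 / ENNReal.ofReal ((r - 1) * ((r + 1) / r)) =
          ENNReal.ofReal (r / (r - 1)) := by
        rw [hp1def, ← ENNReal.ofReal_div_of_pos hq1pos]
        congr 1
        field_simp
      rw [hdivF] at hF
      have hG := hB.norm_rpow_div (ENNReal.ofReal ((r + 1) / r))
      rw [ENNReal.toReal_ofReal (div_pos hr1 hr0).le] at hG
      have hGfun : (fun x => ‖B x‖ ^ ((r + 1) / r)) = fun x => B x ^ ((r + 1) / r) :=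
        funext fun x => by rw [Real.norm_of_nonneg (norm_nonneg _)]
      rw [hGfun] at hG
      have hdivG : p1 / ENNReal.ofReal ((r + 1) / r) = ENNReal.ofReal r := by
        rw [hp1def, ← ENNReal.ofReal_div_of_pos (div_pos hr1 hr0)]
        congr 1
        field_simp
      rw [hdivG] at hG
      have hpq2 : Real.HolderConjugate (r / (r - 1)) r := by
        refine Real.holderConjugate_iff.mpr ⟨?_, ?_⟩
        · rw [lt_div_iff₀ hr1']; linarith
        · rw [inv_div]
          field_simp
          ring
      have Hin := integral_mul_le_Lp_mul_Lq_of_nonneg hpq2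
        (ae_of_all _ fun x => Real.rpow_nonneg (hA0 x) _)
        (ae_of_all _ fun x => Real.rpow_nonneg (norm_nonneg _) _) hF hG
      have eF : ∀ x : EuclideanSpace ℝ (Fin d),
          (A x ^ ((r - 1) * ((r + 1) / r))) ^ (r / (r - 1)) = A x ^ (r + 1) := by
        intro x
        rw [← Real.rpow_mul (hA0 x)]
        congr 1
        field_simp
      have eG : ∀ x : EuclideanSpace ℝ (Fin d),
          (B x ^ ((r + 1) / r)) ^ r = B x ^ (r + 1) := by
        intro x
        rw [← Real.rpow_mul (norm_nonneg _)]
        congr 1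
        field_simp
      simp_rw [eF, show ∀ x, (‖u₁ x - u₂ x‖ ^ ((r + 1) / r)) ^ r = B x ^ (r + 1) from eG] at Hin
      have hInt0 : 0 ≤ ∫ x, A x ^ ((r - 1) * ((r + 1) / r)) * B x ^ ((r + 1) / r) ∂μ :=
        integral_nonneg fun x =>
          mul_nonneg (Real.rpow_nonneg (hA0 x) _) (Real.rpow_nonneg (norm_nonneg _) _)
      have Hpow := Real.rpow_le_rpow hInt0 Hin
        (by positivity : (0:ℝ) ≤ 1 / ((r + 1) / r))
      have eFG : ∀ x : EuclideanSpace ℝ (Fin d),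
          (A x ^ (r - 1) * B x) ^ ((r + 1) / r) =
            A x ^ ((r - 1) * ((r + 1) / r)) * B x ^ ((r + 1) / r) := by
        intro x
        rw [Real.mul_rpow (Real.rpow_nonneg (hA0 x) _) (norm_nonneg _),
          ← Real.rpow_mul (hA0 x)]
      simp_rw [eFG]
      have hX0 : 0 ≤ ∫ x, A x ^ (r + 1) ∂μ :=
        integral_nonneg fun x => Real.rpow_nonneg (hA0 x) _
      have hY0 : 0 ≤ ∫ x, B x ^ (r + 1) ∂μ :=
        integral_nonneg fun x => Real.rpow_nonneg (norm_nonneg _) _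
      rw [Real.mul_rpow (Real.rpow_nonneg hX0 _) (Real.rpow_nonneg hY0 _),
        ← Real.rpow_mul hX0, ← Real.rpow_mul hY0,
        show 1 / (r / (r - 1)) * (1 / ((r + 1) / r)) = (r - 1) / (r + 1) by
          field_simp,
        show 1 / r * (1 / ((r + 1) / r)) = 1 / (r + 1) by
          field_simp] at Hpow
      exact Hpow
  have Hmink : (∫ x, A x ^ (r + 1) ∂μ) ^ (1 / (r + 1)) ≤ N₁ + N₂ := by
    rw [hN1def, hN2def]
    have hp1ne0 : p1 ≠ 0 := by
      rw [hp1def]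
      simp [ENNReal.ofReal_eq_zero]
      linarith
    have hp1net : p1 ≠ ⊤ := by rw [hp1def]; exact ENNReal.ofReal_ne_top
    have htoReal : p1.toReal = r + 1 := by rw [hp1def]; exact ENNReal.toReal_ofReal hr1.le
    have h1le : (1:ℝ≥0∞) ≤ p1 := by
      rw [hp1def, ← ENNReal.ofReal_one]
      exact ENNReal.ofReal_le_ofReal (by linarith)
    have hAe := hA.eLpNorm_eq_integral_rpow_norm hp1ne0 hp1net
    have hu₁e := hu₁.eLpNorm_eq_integral_rpow_norm hp1ne0 hp1net
    have hu₂e := hu₂.eLpNorm_eq_integral_rpow_norm hp1ne0 hp1net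
    rw [htoReal] at hAe hu₁e hu₂e
    have hsplit : A = (fun x => ‖u₁ x‖) + fun x => ‖u₂ x‖ := rfl
    have htri : eLpNorm A p1 μ ≤ eLpNorm u₁ p1 μ + eLpNorm u₂ p1 μ := by
      rw [hsplit]
      refine (eLpNorm_add_le hu₁.norm.1 hu₂.norm.1 h1le).trans ?_
      rw [eLpNorm_norm, eLpNorm_norm]
    rw [hAe, hu₁e, hu₂e] at htri
    have hi₁0 : (0:ℝ) ≤ (∫ x, ‖u₁ x‖ ^ (r + 1) ∂μ) ^ (r + 1)⁻¹ :=
      Real.rpow_nonneg (integral_nonneg fun x => Real.rpow_nonneg (norm_nonneg _) _) _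
    have hi₂0 : (0:ℝ) ≤ (∫ x, ‖u₂ x‖ ^ (r + 1) ∂μ) ^ (r + 1)⁻¹ :=
      Real.rpow_nonneg (integral_nonneg fun x => Real.rpow_nonneg (norm_nonneg _) _) _
    rw [← ENNReal.ofReal_add hi₁0 hi₂0] at htri
    have hreal := (ENNReal.ofReal_le_ofReal_iff (add_nonneg hi₁0 hi₂0)).mp htri
    have hnormA : (fun x => ‖A x‖ ^ (r + 1)) = fun x => A x ^ (r + 1) :=
      funext fun x => by rw [Real.norm_of_nonneg (hA0 x)]
    rw [hnormA] at hreal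
    simpa [one_div] using hreal
  have HX : (∫ x, A x ^ (r + 1) ∂μ) ^ ((r - 1) / (r + 1)) ≤ (N₁ + N₂) ^ (r - 1) := by
    have hXnn : 0 ≤ ∫ x, A x ^ (r + 1) ∂μ := integral_nonneg fun x => Real.rpow_nonneg (hA0 x) _
    have : (∫ x, A x ^ (r + 1) ∂μ) ^ ((r - 1) / (r + 1)) =
        ((∫ x, A x ^ (r + 1) ∂μ) ^ (1 / (r + 1))) ^ (r - 1) := by
      rw [← Real.rpow_mul hXnn]
      congr 1
      field_simp
    rw [this]
    exact Real.rpow_le_rpow (Real.rpow_nonneg hXnn _) Hmink (by linarith)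
  calc |∫ x, φ x ∂μ| = ‖∫ x, φ x ∂μ‖ := (Real.norm_eq_abs _).symm
    _ ≤ ∫ x, ‖φ x‖ ∂μ := norm_integral_le_integral_norm _
    _ = ∫ x, |φ x| ∂μ := by simp [Real.norm_eq_abs]
    _ ≤ ∫ x, r * ((A x ^ (r - 1) * B x) * C x) ∂μ :=
        integral_mono hint.abs (hfC_int.const_mul r) hpt
    _ = r * ∫ x, (A x ^ (r - 1) * B x) * C x ∂μ := integral_const_mul _ _
    _ ≤ r * ((∫ x, (A x ^ (r - 1) * B x) ^ ((r + 1) / r) ∂μ) ^ (1 / ((r + 1) / r)) *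
          (∫ x, C x ^ (r + 1) ∂μ) ^ (1 / (r + 1))) := by
        exact mul_le_mul_of_nonneg_left H1 (by linarith)
    _ ≤ r * (((∫ x, A x ^ (r + 1) ∂μ) ^ ((r - 1) / (r + 1)) * NB) * NC) := by
        refine mul_le_mul_of_nonneg_left (mul_le_mul_of_nonneg_right H2 hNC0) (by linarith)
    _ ≤ r * (((N₁ + N₂) ^ (r - 1) * NB) * NC) := by
        refine mul_le_mul_of_nonneg_left
          (mul_le_mul_of_nonneg_right (mul_le_mul_of_nonneg_right HX hNB0) hNC0) (by linarith)
    _ = r * (N₁ + N₂) ^ (r - 1) * NB * NC := by ring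
end

section
/- Let O ⊆ ℝ^d be a Lebesgue-measurable set of finite Lebesgue measure, let r and q be real numbers with 1 < q < r, let κ ∈ ℝ, let β > 0, and let u, v ∈ L^{r+1}(O;ℝ^d). Then |κ| · | ∫_O (|u|^{q-1} u − |v|^{q-1} v) · (u − v) dx | ≤ (β/2) ∫_O |u|^{r-1} |u − v|^2 dx + (β/4) ∫_O |v|^{r-1} |u − v|^2 dx + (ϱ_{2,r} + ϱ_{3,r}) ∫_O |u − v|^2 dx, where ϱ_{2,r} = ((r-q)/(r-1)) · (2(q-1)/(β(r-1)))^{(q-1)/(r-q)} · (|κ| q 2^{q-1})^{(r-1)/(r-q)} and ϱ_{3,r} = ((r-q)/(r-1)) · (4(q-1)/(β(r-1)))^{(q-1)/(r-q)} · (|κ| q 2^{q-1})^{(r-1)/(r-q)}. -/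
open scoped RealInnerProductSpace
open MeasureTheory
open scoped ENNReal

/-- Scalar Bernoulli-type inequality: `s^q - t^q ≤ q s^{q-1} (s - t)` for `0 ≤ t ≤ s`. -/
lemma pump_pow_diff_le {q s t : ℝ} (hq : 1 ≤ q) (ht : 0 ≤ t) (hts : t ≤ s) :
    s ^ q - t ^ q ≤ q * s ^ (q - 1) * (s - t) := by
  rcases eq_or_lt_of_le (ht.trans hts) with hs | hs
  · have ht0 : t = 0 := le_antisymm (hs ▸ hts) ht
    have hq0 : q ≠ 0 := by positivity
    simp [← hs, ht0, Real.zero_rpow hq0]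
  · have hs0 : 0 < s := hs
    have hx : -1 ≤ t / s - 1 := by
      have : 0 ≤ t / s := div_nonneg ht hs0.le
      linarith
    have hber := one_add_mul_self_le_rpow_one_add hx hq
    rw [show (1 : ℝ) + (t / s - 1) = t / s by ring] at hber
    have hdiv : (t / s) ^ q = t ^ q / s ^ q := Real.div_rpow ht hs0.le q
    have hsq : s ^ q = s ^ (q - 1) * s := by
      have h := Real.rpow_add' hs0.le (show q - 1 + 1 ≠ 0 from fun h => by
        simp at h; linarith)
      rw [Real.rpow_one, show q - 1 + 1 = q by ring] at h
      exact h
    have hspow : 0 < s ^ q := Real.rpow_pos_of_pos hs0 q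
    have h2 : (1 + q * (t / s - 1)) * s ^ q ≤ t ^ q := by
      calc (1 + q * (t / s - 1)) * s ^ q ≤ (t / s) ^ q * s ^ q := by nlinarith
        _ = t ^ q := by rw [hdiv]; field_simp
    have key : s ^ (q - 1) * s + q * (s ^ (q - 1) * t - s ^ (q - 1) * s) ≤ t ^ q := by
      calc s ^ (q - 1) * s + q * (s ^ (q - 1) * t - s ^ (q - 1) * s)
          = (1 + q * (t / s - 1)) * (s ^ (q - 1) * s) := by field_simp
        _ = (1 + q * (t / s - 1)) * s ^ q := by rw [← hsq]
        _ ≤ t ^ q := h2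
    rw [hsq]
    nlinarith [key]

/-- Scalar core of the pointwise estimate. -/
lemma pump_core {q s t c D : ℝ} (hq : 1 < q) (ht : 0 ≤ t) (hts : t ≤ s) (hc : c ≤ s * t)
    (hD : D = s ^ 2 - 2 * c + t ^ 2) (he : (s - t) ^ 2 ≤ D) :
    0 ≤ s ^ (q - 1) * (s ^ 2 - c) + t ^ (q - 1) * (t ^ 2 - c) ∧
      s ^ (q - 1) * (s ^ 2 - c) + t ^ (q - 1) * (t ^ 2 - c) ≤
        q * (s ^ (q - 1) + t ^ (q - 1)) * D := by
  have hs : 0 ≤ s := ht.trans hts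
  have hA : (0 : ℝ) ≤ s ^ (q - 1) := Real.rpow_nonneg hs _
  have hB : (0 : ℝ) ≤ t ^ (q - 1) := Real.rpow_nonneg ht _
  have hAs : s ^ q = s ^ (q - 1) * s := by
    have h := Real.rpow_add' hs (show q - 1 + 1 ≠ 0 from fun h => by simp at h; linarith)
    rw [Real.rpow_one, show q - 1 + 1 = q by ring] at h
    exact h
  have hBt : t ^ q = t ^ (q - 1) * t := by
    have h := Real.rpow_add' ht (show q - 1 + 1 ≠ 0 from fun h => by simp at h; linarith)
    rw [Real.rpow_one, show q - 1 + 1 = q by ring] at h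
    exact h
  have hpow : s ^ q - t ^ q ≤ q * s ^ (q - 1) * (s - t) := pump_pow_diff_le hq.le ht hts
  have hqmono : t ^ q ≤ s ^ q := Real.rpow_le_rpow ht hts (by linarith)
  have hident : s ^ (q - 1) * (s ^ 2 - c) + t ^ (q - 1) * (t ^ 2 - c) =
      (s ^ (q - 1) + t ^ (q - 1)) * (s * t - c) + (s ^ q - t ^ q) * (s - t) := by
    rw [hAs, hBt]; ring
  constructor
  · rw [hident]
    have h1 : 0 ≤ (s ^ (q - 1) + t ^ (q - 1)) * (s * t - c) :=
      mul_nonneg (by linarith) (by linarith)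
    have h2 : 0 ≤ (s ^ q - t ^ q) * (s - t) := mul_nonneg (by linarith) (by linarith)
    linarith
  · rw [hident]
    have hstc : s * t - c = (D - (s - t) ^ 2) / 2 := by rw [hD]; ring
    have hT : (s ^ q - t ^ q) * (s - t) ≤ q * s ^ (q - 1) * (s - t) ^ 2 := by
      have h := mul_le_mul_of_nonneg_right hpow (by linarith : (0:ℝ) ≤ s - t)
      nlinarith [h]
    rw [hstc]
    have he0 : (0:ℝ) ≤ (s - t) ^ 2 := sq_nonneg _
    nlinarith [mul_nonneg (mul_nonneg (by linarith : (0:ℝ) ≤ s ^ (q-1) + t ^ (q-1))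
        (by linarith : (0:ℝ) ≤ D - (s - t) ^ 2)) (by linarith : (0:ℝ) ≤ q - 1/2),
      hT, mul_nonneg (mul_nonneg (by linarith : (0:ℝ) ≤ q) hB)
        (by linarith : (0:ℝ) ≤ (s - t) ^ 2)]

/-- Pointwise bounds for the monotone quantity, ordered case `‖b‖ ≤ ‖a‖`. -/
lemma pump_inner_aux {E : Type*} [NormedAddCommGroup E] [InnerProductSpace ℝ E]
    {q : ℝ} (hq : 1 < q) (a b : E) (hba : ‖b‖ ≤ ‖a‖) :
    0 ≤ ⟪‖a‖ ^ (q - 1) • a - ‖b‖ ^ (q - 1) • b, a - b⟫ ∧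
      ⟪‖a‖ ^ (q - 1) • a - ‖b‖ ^ (q - 1) • b, a - b⟫ ≤
        q * (‖a‖ ^ (q - 1) + ‖b‖ ^ (q - 1)) * ‖a - b‖ ^ 2 := by
  have hexp : ⟪‖a‖ ^ (q - 1) • a - ‖b‖ ^ (q - 1) • b, a - b⟫ =
      ‖a‖ ^ (q - 1) * (‖a‖ ^ 2 - ⟪a, b⟫) + ‖b‖ ^ (q - 1) * (‖b‖ ^ 2 - ⟪a, b⟫) := by
    simp only [inner_sub_left, inner_sub_right, real_inner_smul_left,
      real_inner_self_eq_norm_sq]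
    rw [real_inner_comm a b]
    ring
  have he : (‖a‖ - ‖b‖) ^ 2 ≤ ‖a - b‖ ^ 2 := by
    have habs : |‖a‖ - ‖b‖| ≤ ‖a - b‖ := abs_norm_sub_norm_le a b
    calc (‖a‖ - ‖b‖) ^ 2 = |‖a‖ - ‖b‖| ^ 2 := (sq_abs _).symm
      _ ≤ ‖a - b‖ ^ 2 := by nlinarith [abs_nonneg (‖a‖ - ‖b‖), norm_nonneg (a - b)]
  rw [hexp]
  exact pump_core hq (norm_nonneg b) hba (real_inner_le_norm a b) (norm_sub_sq_real a b) he

/-- Pointwise absolute-value bound for the pumping nonlinearity difference. -/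
lemma pump_inner_abs {E : Type*} [NormedAddCommGroup E] [InnerProductSpace ℝ E]
    {q : ℝ} (hq : 1 < q) (a b : E) :
    |⟪‖a‖ ^ (q - 1) • a - ‖b‖ ^ (q - 1) • b, a - b⟫| ≤
      q * (‖a‖ ^ (q - 1) + ‖b‖ ^ (q - 1)) * ‖a - b‖ ^ 2 := by
  rcases le_total ‖b‖ ‖a‖ with h | h
  · obtain ⟨h0, h1⟩ := pump_inner_aux hq a b h
    rw [abs_of_nonneg h0]; exact h1
  · obtain ⟨h0, h1⟩ := pump_inner_aux hq b a h
    have hsym : ⟪‖a‖ ^ (q - 1) • a - ‖b‖ ^ (q - 1) • b, a - b⟫ =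
        ⟪‖b‖ ^ (q - 1) • b - ‖a‖ ^ (q - 1) • a, b - a⟫ := by
      rw [show ‖a‖ ^ (q - 1) • a - ‖b‖ ^ (q - 1) • b
            = -(‖b‖ ^ (q - 1) • b - ‖a‖ ^ (q - 1) • a) from (neg_sub _ _).symm,
          show a - b = -(b - a) from (neg_sub _ _).symm, inner_neg_neg]
    rw [hsym, abs_of_nonneg h0]
    calc ⟪‖b‖ ^ (q - 1) • b - ‖a‖ ^ (q - 1) • a, b - a⟫
        ≤ q * (‖b‖ ^ (q - 1) + ‖a‖ ^ (q - 1)) * ‖b - a‖ ^ 2 := h1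
      _ = q * (‖a‖ ^ (q - 1) + ‖b‖ ^ (q - 1)) * ‖a - b‖ ^ 2 := by
          rw [norm_sub_rev]; ring

/-- Young-type absorption: `K t^{q-1} ≤ ε t^{r-1} + C(K, ε)`. -/
lemma pump_young {r q : ℝ} (hq : 1 < q) (hqr : q < r) {K ε : ℝ} (hK : 0 ≤ K) (hε : 0 < ε)
    {t : ℝ} (ht : 0 ≤ t) :
    K * t ^ (q - 1) ≤ ε * t ^ (r - 1) +
      ((r - q) / (r - 1)) * ((q - 1) / (ε * (r - 1))) ^ ((q - 1) / (r - q)) *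
        K ^ ((r - 1) / (r - q)) := by
  have hq1 : (0:ℝ) < q - 1 := by linarith
  have hrq : (0:ℝ) < r - q := by linarith
  have hr1 : (0:ℝ) < r - 1 := by linarith
  set p := (r - 1) / (q - 1) with hp
  set p' := (r - 1) / (r - q) with hp'
  have hp0 : 0 < p := by positivity
  have hp'0 : 0 < p' := by positivity
  have hpq : Real.HolderConjugate p p' := by
    rw [Real.holderConjugate_iff_eq_conjExponent (by rw [hp, lt_div_iff₀ hq1]; linarith)]
    rw [hp, hp']; field_simp
    rw [sub_sub_sub_cancel_right, div_self hrq.ne']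
  set cc := ε * p with hcc
  have hc : 0 < cc := by positivity
  have ha : 0 ≤ cc ^ (1 / p) * t ^ (q - 1) :=
    mul_nonneg (Real.rpow_nonneg hc.le _) (Real.rpow_nonneg ht _)
  have hb : 0 ≤ K * cc ^ (-(1 / p)) := mul_nonneg hK (Real.rpow_nonneg hc.le _)
  have hy := Real.young_inequality_of_nonneg ha hb hpq
  have h1 : cc ^ (1 / p) * cc ^ (-(1 / p)) = 1 := by
    rw [← Real.rpow_add hc]; norm_num
  have hab : (cc ^ (1 / p) * t ^ (q - 1)) * (K * cc ^ (-(1 / p))) = K * t ^ (q - 1) := by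
    calc (cc ^ (1 / p) * t ^ (q - 1)) * (K * cc ^ (-(1 / p)))
        = (K * t ^ (q - 1)) * (cc ^ (1 / p) * cc ^ (-(1 / p))) := by ring
      _ = K * t ^ (q - 1) := by rw [h1, mul_one]
  have hap : (cc ^ (1 / p) * t ^ (q - 1)) ^ p / p = ε * t ^ (r - 1) := by
    rw [Real.mul_rpow (Real.rpow_nonneg hc.le _) (Real.rpow_nonneg ht _),
      ← Real.rpow_mul hc.le, ← Real.rpow_mul ht]
    have e1 : 1 / p * p = 1 := by field_simp
    have e2 : (q - 1) * p = r - 1 := by rw [hp]; field_simp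
    rw [e1, e2, Real.rpow_one, hcc]
    field_simp
  have hbp : (K * cc ^ (-(1 / p))) ^ p' / p' =
      ((r - q) / (r - 1)) * ((q - 1) / (ε * (r - 1))) ^ ((q - 1) / (r - q)) *
        K ^ ((r - 1) / (r - q)) := by
    rw [Real.mul_rpow hK (Real.rpow_nonneg hc.le _), ← Real.rpow_mul hc.le]
    have e3 : -(1 / p) * p' = -((q - 1) / (r - q)) := by
      rw [hp, hp']; field_simp
    have e4 : cc ^ (-((q - 1) / (r - q))) =
        ((q - 1) / (ε * (r - 1))) ^ ((q - 1) / (r - q)) := by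
      rw [Real.rpow_neg hc.le, ← Real.inv_rpow hc.le]
      congr 1
      rw [hcc, hp]
      field_simp
    rw [e3, e4, hp']
    field_simp
  calc K * t ^ (q - 1) = (cc ^ (1 / p) * t ^ (q - 1)) * (K * cc ^ (-(1 / p))) := hab.symm
    _ ≤ (cc ^ (1 / p) * t ^ (q - 1)) ^ p / p + (K * cc ^ (-(1 / p))) ^ p' / p' := hy
    _ = _ := by rw [hap, hbp]

/-- Domination of the mixed term by pure `r+1` powers. -/
lemma pump_dom {r : ℝ} (hr : 1 < r) {A B : ℝ} (hA : 0 ≤ A) (hB : 0 ≤ B) :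
    A ^ (r - 1) * B ^ 2 ≤ A ^ (r + 1) + B ^ (r + 1) := by
  have hAr : (0:ℝ) ≤ A ^ (r + 1) := Real.rpow_nonneg hA _
  have hBr : (0:ℝ) ≤ B ^ (r + 1) := Real.rpow_nonneg hB _
  rcases le_total A B with h | h
  · have h1 : A ^ (r - 1) ≤ B ^ (r - 1) := Real.rpow_le_rpow hA h (by linarith)
    have h2 : B ^ (r - 1) * B ^ 2 = B ^ (r + 1) := by
      rw [show B ^ (2:ℕ) = B ^ (2:ℝ) from (Real.rpow_two B).symm,
        ← Real.rpow_add' hB (show r - 1 + 2 ≠ 0 from fun h => by linarith),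
        show r - 1 + 2 = r + 1 by ring]
    nlinarith [sq_nonneg B]
  · have h1 : B ^ 2 ≤ A ^ 2 := by nlinarith
    have h2 : A ^ (r - 1) * A ^ 2 = A ^ (r + 1) := by
      rw [show A ^ (2:ℕ) = A ^ (2:ℝ) from (Real.rpow_two A).symm,
        ← Real.rpow_add' hA (show r - 1 + 2 ≠ 0 from fun h => by linarith),
        show r - 1 + 2 = r + 1 by ring]
    nlinarith [Real.rpow_nonneg hA (r - 1)]

set_option maxHeartbeats 1000000 in
/-- Full relaxed-monotonicity estimate for the difference `C₀(u) − C₀(v)` of the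
pumping nonlinearity `C₀(u) = |u|^{q-1} u`, with explicit constants
`ϱ_{2,r}` and `ϱ_{3,r}`, on a finite-measure set `O`. -/
theorem pumping_relaxed_monotonicity
    (d : ℕ) (O : Set (EuclideanSpace ℝ (Fin d))) (hO : MeasurableSet O)
    (hOfin : volume O ≠ ⊤)
    (r q : ℝ) (hq : 1 < q) (hqr : q < r)
    (κ β : ℝ) (hβ : 0 < β)
    (u v : EuclideanSpace ℝ (Fin d) → EuclideanSpace ℝ (Fin d))
    (hu : MemLp u (ENNReal.ofReal (r + 1)) (volume.restrict O))
    (hv : MemLp v (ENNReal.ofReal (r + 1)) (volume.restrict O)) :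
    |κ| * |∫ x in O, ⟪‖u x‖ ^ (q - 1) • u x - ‖v x‖ ^ (q - 1) • v x, u x - v x⟫| ≤
      (β / 2) * (∫ x in O, ‖u x‖ ^ (r - 1) * ‖u x - v x‖ ^ 2) +
      (β / 4) * (∫ x in O, ‖v x‖ ^ (r - 1) * ‖u x - v x‖ ^ 2) +
      ((((r - q) / (r - 1)) * (2 * (q - 1) / (β * (r - 1))) ^ ((q - 1) / (r - q)) *
            (|κ| * q * 2 ^ (q - 1)) ^ ((r - 1) / (r - q))) +
        (((r - q) / (r - 1)) * (4 * (q - 1) / (β * (r - 1))) ^ ((q - 1) / (r - q)) *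
            (|κ| * q * 2 ^ (q - 1)) ^ ((r - 1) / (r - q)))) *
        (∫ x in O, ‖u x - v x‖ ^ 2) := by
  have hr : 1 < r := hq.trans hqr
  set μ := volume.restrict O with hμ
  haveI : IsFiniteMeasure μ := ⟨by
    rw [hμ, Measure.restrict_apply_univ]
    exact lt_top_iff_ne_top.mpr hOfin⟩
  have hp_ne_zero : ENNReal.ofReal (r + 1) ≠ 0 :=
    (ENNReal.ofReal_pos.mpr (by linarith)).ne'
  have hp_ne_top : ENNReal.ofReal (r + 1) ≠ ⊤ := ENNReal.ofReal_ne_top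
  have htR : (ENNReal.ofReal (r + 1)).toReal = r + 1 := ENNReal.toReal_ofReal (by linarith)
  -- integrability of the pure powers
  have hu_int : Integrable (fun x => ‖u x‖ ^ (r + 1)) μ := by
    have := hu.integrable_norm_rpow hp_ne_zero hp_ne_top
    rwa [htR] at this
  have hv_int : Integrable (fun x => ‖v x‖ ^ (r + 1)) μ := by
    have := hv.integrable_norm_rpow hp_ne_zero hp_ne_top
    rwa [htR] at this
  have huv : MemLp (u - v) (ENNReal.ofReal (r + 1)) μ := hu.sub hv
  have huv_int : Integrable (fun x => ‖u x - v x‖ ^ (r + 1)) μ := by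
    have := huv.integrable_norm_rpow hp_ne_zero hp_ne_top
    rw [htR] at this
    simpa [Pi.sub_apply] using this
  -- integrability of ‖u - v‖²
  have I_uv2 : Integrable (fun x => ‖u x - v x‖ ^ 2) μ := by
    have h2le : (2 : ℝ≥0∞) ≤ ENNReal.ofReal (r + 1) := by
      rw [show (2 : ℝ≥0∞) = ENNReal.ofReal 2 by simp]
      exact ENNReal.ofReal_le_ofReal (by linarith)
    have h2 : MemLp (u - v) 2 μ := huv.mono_exponent h2le
    have := h2.integrable_norm_rpow two_ne_zero ENNReal.ofNat_ne_top
    simp only [ENNReal.toReal_ofNat, Real.rpow_two] at this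
    simpa [Pi.sub_apply] using this
  -- measurability helpers
  have muv : AEMeasurable (fun x => ‖u x - v x‖ ^ 2) μ :=
    (((hu.1.sub hv.1).norm.aemeasurable).pow_const 2)
  have mrpow : ∀ c : ℝ, Measurable (fun y : ℝ => y ^ c) := by
    intro c; measurability
  have I_ur : Integrable (fun x => ‖u x‖ ^ (r - 1) * ‖u x - v x‖ ^ 2) μ := by
    have m1 : AEMeasurable (fun x => ‖u x‖ ^ (r - 1)) μ :=
      (mrpow (r - 1)).comp_aemeasurable hu.1.norm.aemeasurable
    apply (hu_int.add huv_int).mono' (m1.mul muv).aestronglyMeasurable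
    filter_upwards with x
    simp only [Pi.mul_apply, Pi.add_apply]
    rw [Real.norm_eq_abs, abs_of_nonneg (by positivity : (0:ℝ) ≤ ‖u x‖ ^ (r - 1) * ‖u x - v x‖ ^ 2)]
    exact pump_dom hr (norm_nonneg _) (norm_nonneg _)
  have I_vr : Integrable (fun x => ‖v x‖ ^ (r - 1) * ‖u x - v x‖ ^ 2) μ := by
    have m1 : AEMeasurable (fun x => ‖v x‖ ^ (r - 1)) μ :=
      (mrpow (r - 1)).comp_aemeasurable hv.1.norm.aemeasurable
    apply (hv_int.add huv_int).mono' (m1.mul muv).aestronglyMeasurable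
    filter_upwards with x
    simp only [Pi.mul_apply, Pi.add_apply]
    rw [Real.norm_eq_abs, abs_of_nonneg (by positivity : (0:ℝ) ≤ ‖v x‖ ^ (r - 1) * ‖u x - v x‖ ^ 2)]
    exact pump_dom hr (norm_nonneg _) (norm_nonneg _)
  -- constants
  set K := (|κ| * q * 2 ^ (q - 1) : ℝ) with hKdef
  have h2q : (1:ℝ) ≤ 2 ^ (q - 1) := Real.one_le_rpow one_le_two (by linarith)
  have hK0 : 0 ≤ K := by
    rw [hKdef]
    exact mul_nonneg (mul_nonneg (abs_nonneg κ) (by linarith)) (by positivity)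
  set ϱ₂ := ((r - q) / (r - 1)) * (2 * (q - 1) / (β * (r - 1))) ^ ((q - 1) / (r - q)) *
      K ^ ((r - 1) / (r - q)) with hϱ₂
  set ϱ₃ := ((r - q) / (r - 1)) * (4 * (q - 1) / (β * (r - 1))) ^ ((q - 1) / (r - q)) *
      K ^ ((r - 1) / (r - q)) with hϱ₃
  -- pointwise master estimate
  have hpt : ∀ x, |κ| * |⟪‖u x‖ ^ (q - 1) • u x - ‖v x‖ ^ (q - 1) • v x, u x - v x⟫| ≤
      β / 2 * (‖u x‖ ^ (r - 1) * ‖u x - v x‖ ^ 2) +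
        (β / 4 * (‖v x‖ ^ (r - 1) * ‖u x - v x‖ ^ 2) + (ϱ₂ + ϱ₃) * ‖u x - v x‖ ^ 2) := by
    intro x
    have h1 := mul_le_mul_of_nonneg_left (pump_inner_abs hq (u x) (v x)) (abs_nonneg κ)
    have hDx0 : (0:ℝ) ≤ ‖u x - v x‖ ^ 2 := sq_nonneg _
    have hSa : (0:ℝ) ≤ ‖u x‖ ^ (q - 1) := Real.rpow_nonneg (norm_nonneg _) _
    have hSb : (0:ℝ) ≤ ‖v x‖ ^ (q - 1) := Real.rpow_nonneg (norm_nonneg _) _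
    have hK1 : |κ| * q ≤ K := by
      rw [hKdef]
      nlinarith [abs_nonneg κ, hq]
    have hy1 : K * ‖u x‖ ^ (q - 1) ≤ β / 2 * ‖u x‖ ^ (r - 1) + ϱ₂ := by
      have h := pump_young hq hqr hK0 (by positivity : (0:ℝ) < β / 2) (norm_nonneg (u x))
      rw [show (q - 1) / (β / 2 * (r - 1)) = 2 * (q - 1) / (β * (r - 1)) by
        rw [div_eq_div_iff (mul_pos (by linarith : (0:ℝ) < β / 2) (by linarith : (0:ℝ) < r - 1)).ne'
          (mul_pos hβ (by linarith : (0:ℝ) < r - 1)).ne']; ring] at h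
      rw [hϱ₂]
      linarith
    have hy2 : K * ‖v x‖ ^ (q - 1) ≤ β / 4 * ‖v x‖ ^ (r - 1) + ϱ₃ := by
      have h := pump_young hq hqr hK0 (by positivity : (0:ℝ) < β / 4) (norm_nonneg (v x))
      rw [show (q - 1) / (β / 4 * (r - 1)) = 4 * (q - 1) / (β * (r - 1)) by
        rw [div_eq_div_iff (mul_pos (by linarith : (0:ℝ) < β / 4) (by linarith : (0:ℝ) < r - 1)).ne'
          (mul_pos hβ (by linarith : (0:ℝ) < r - 1)).ne']; ring] at h
      rw [hϱ₃]
      linarith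
    have c0a := mul_le_mul_of_nonneg_right (mul_le_mul_of_nonneg_right hK1 hSa) hDx0
    have c0b := mul_le_mul_of_nonneg_right (mul_le_mul_of_nonneg_right hK1 hSb) hDx0
    have c1a := mul_le_mul_of_nonneg_right hy1 hDx0
    have c1b := mul_le_mul_of_nonneg_right hy2 hDx0
    nlinarith [h1, c0a, c0b, c1a, c1b]
  -- integral estimate
  set F : EuclideanSpace ℝ (Fin d) → ℝ :=
    fun x => ⟪‖u x‖ ^ (q - 1) • u x - ‖v x‖ ^ (q - 1) • v x, u x - v x⟫ with hF
  set G : EuclideanSpace ℝ (Fin d) → ℝ :=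
    fun x => β / 2 * (‖u x‖ ^ (r - 1) * ‖u x - v x‖ ^ 2) +
      (β / 4 * (‖v x‖ ^ (r - 1) * ‖u x - v x‖ ^ 2) + (ϱ₂ + ϱ₃) * ‖u x - v x‖ ^ 2) with hG
  have hGint : Integrable G μ :=
    (I_ur.const_mul _).add ((I_vr.const_mul _).add (I_uv2.const_mul _))
  have step1 : |∫ x, F x ∂μ| ≤ ∫ x, |F x| ∂μ := by
    simpa [Real.norm_eq_abs] using norm_integral_le_integral_norm (μ := μ) F
  have step3 : ∫ x, |κ| * |F x| ∂μ ≤ ∫ x, G x ∂μ := by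
    apply integral_mono_of_nonneg
    · filter_upwards with x
      positivity
    · exact hGint
    · filter_upwards with x
      exact hpt x
  have step4 : ∫ x, G x ∂μ = β / 2 * ∫ x, ‖u x‖ ^ (r - 1) * ‖u x - v x‖ ^ 2 ∂μ +
      (β / 4 * ∫ x, ‖v x‖ ^ (r - 1) * ‖u x - v x‖ ^ 2 ∂μ +
        (ϱ₂ + ϱ₃) * ∫ x, ‖u x - v x‖ ^ 2 ∂μ) := by
    have hg1 : Integrable (fun x => β / 4 * (‖v x‖ ^ (r - 1) * ‖u x - v x‖ ^ 2) +
        (ϱ₂ + ϱ₃) * ‖u x - v x‖ ^ 2) μ := (I_vr.const_mul _).add (I_uv2.const_mul _)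
    simp only [hG]
    rw [integral_add (I_ur.const_mul _) hg1,
      integral_add (I_vr.const_mul _) (I_uv2.const_mul _),
      integral_const_mul, integral_const_mul, integral_const_mul]
  have step2 : |κ| * ∫ x, |F x| ∂μ = ∫ x, |κ| * |F x| ∂μ := (integral_const_mul _ _).symm
  have main : |κ| * |∫ x, F x ∂μ| ≤ ∫ x, G x ∂μ := by
    calc |κ| * |∫ x, F x ∂μ| ≤ |κ| * ∫ x, |F x| ∂μ :=
          mul_le_mul_of_nonneg_left step1 (abs_nonneg κ)
      _ = ∫ x, |κ| * |F x| ∂μ := step2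
      _ ≤ ∫ x, G x ∂μ := step3
  rw [step4] at main
  linarith [main]
end
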